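/- arXiv:1204.4503 — 7 statements merged into one kernel-verified Lean document; each statement's English description precedes it below -/
import Mathlib

section
/- Let q ≥ 3 be an integer and let 0 ≤ β < q/2. Then there exists ε > 0 such that D_β(x) < 0 for all x ∈ (1/q, 1/q + ε); equivalently, s^♯(β) := inf{s ∈ (1/q, 1] : D_β(s) ≥ 0} (with the convention that the infimum of the empty set is 1) satisfies s^♯(β) > 1/q. -/
/-- The drift function `D_β(x) = −x + (1 + (q−1) e^{2β(1−qx)/(q−1)})⁻¹`,
equivalently `−x + e^{2βx}/(e^{2βx} + (q−1)e^{2β(1−x)/(q−1)})`. -/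
noncomputable def Dfun (q : ℕ) (β x : ℝ) : ℝ :=
  -x + (1 + ((q : ℝ) - 1) * Real.exp (2 * β * (1 - (q : ℝ) * x) / ((q : ℝ) - 1)))⁻¹

/-- The dynamical (spinodal) critical inverse temperature
`β_s(q) = sup {β ≥ 0 : D_β(x) ≠ 0 for all x ∈ (1/q,1)}`. -/
noncomputable def betaS (q : ℕ) : ℝ :=
  sSup {β : ℝ | 0 ≤ β ∧ ∀ x ∈ Set.Ioo (1 / (q : ℝ)) 1, Dfun q β x ≠ 0}

open scoped Classical in
/-- `s^♯(β) = inf {s ∈ (1/q,1] : D_β(s) ≥ 0}`, with the convention that the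
infimum of the empty set is `1`. -/
noncomputable def sSharp (q : ℕ) (β : ℝ) : ℝ :=
  if {s : ℝ | s ∈ Set.Ioc (1 / (q : ℝ)) 1 ∧ 0 ≤ Dfun q β s}.Nonempty then
    sInf {s : ℝ | s ∈ Set.Ioc (1 / (q : ℝ)) 1 ∧ 0 ≤ Dfun q β s}
  else 1

/-- (Proposition 3.1, part 2): for `q ≥ 3` and `0 ≤ β < q/2`, `D_β` is negative
just to the right of `1/q`; equivalently `s^♯(β) > 1/q`. -/
theorem sSharp_gt (q : ℕ) (hq : 3 ≤ q) (β : ℝ) (hβ0 : 0 ≤ β) (hβ : β < (q : ℝ) / 2) :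
    (∃ ε : ℝ, 0 < ε ∧ ∀ x ∈ Set.Ioo (1 / (q : ℝ)) (1 / (q : ℝ) + ε), Dfun q β x < 0) ∧
    1 / (q : ℝ) < sSharp q β := by
  have hq1 : (1 : ℝ) < (q : ℝ) := by exact_mod_cast (by omega : 1 < q)
  have hq0 : (0 : ℝ) < (q : ℝ) := by linarith
  have hqne : (q : ℝ) ≠ 0 := ne_of_gt hq0
  set a : ℝ := 1 / (q : ℝ) with ha
  have hfa : 2 * β * (1 - (q : ℝ) * a) / ((q : ℝ) - 1) = 0 := by
    rw [ha]; field_simp; simp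
  have hDa : Dfun q β a = 0 := by
    rw [Dfun, hfa, Real.exp_zero, ha]
    field_simp
    have h1q : (1:ℝ) + ((q:ℝ) - 1) = q := by ring
    rw [h1q, div_self hqne]; ring
  -- derivative of the exponent at a
  have h2 : HasDerivAt (fun x : ℝ => 1 - (q : ℝ) * x) (-(q : ℝ)) a := by
    simpa using ((hasDerivAt_id a).const_mul (q : ℝ)).const_sub 1
  have h3 : HasDerivAt (fun x : ℝ => 2 * β * (1 - (q : ℝ) * x)) (2 * β * (-(q : ℝ))) a :=
    h2.const_mul (2 * β)
  have h4 : HasDerivAt (fun x : ℝ => 2 * β * (1 - (q : ℝ) * x) / ((q : ℝ) - 1))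
      (2 * β * (-(q : ℝ)) / ((q : ℝ) - 1)) a := h3.div_const _
  have h5 := h4.exp
  have h6 : HasDerivAt
      (fun x : ℝ => 1 + ((q : ℝ) - 1) * Real.exp (2 * β * (1 - (q : ℝ) * x) / ((q : ℝ) - 1)))
      (((q : ℝ) - 1) * (Real.exp (2 * β * (1 - (q : ℝ) * a) / ((q : ℝ) - 1)) *
        (2 * β * (-(q : ℝ)) / ((q : ℝ) - 1)))) a := (h5.const_mul _).const_add 1
  have hga : (1 + ((q : ℝ) - 1) * Real.exp (2 * β * (1 - (q : ℝ) * a) / ((q : ℝ) - 1))) = (q : ℝ) := by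
    rw [hfa, Real.exp_zero]; ring
  have hgane : (1 + ((q : ℝ) - 1) * Real.exp (2 * β * (1 - (q : ℝ) * a) / ((q : ℝ) - 1))) ≠ 0 := by
    rw [hga]; exact hqne
  have h7 := h6.inv hgane
  have hD : HasDerivAt (fun x => Dfun q β x) (-1 + 2 * β / (q : ℝ)) a := by
    have h8 := (hasDerivAt_id a).neg.add h7
    have heq : -(((q : ℝ) - 1) * (Real.exp (2 * β * (1 - (q : ℝ) * a) / ((q : ℝ) - 1)) *
          (2 * β * (-(q : ℝ)) / ((q : ℝ) - 1)))) /
        (1 + ((q : ℝ) - 1) * Real.exp (2 * β * (1 - (q : ℝ) * a) / ((q : ℝ) - 1))) ^ 2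
        = 2 * β / (q : ℝ) := by
      rw [hfa, Real.exp_zero]
      have hq1' : (q : ℝ) - 1 ≠ 0 := by linarith
      field_simp
      rw [show (1:ℝ) + ((q:ℝ) - 1) = q by ring]; exact mul_div_cancel_left₀ β (pow_ne_zero 2 hqne)
    have : -1 + 2 * β / (q : ℝ) = -1 + -(((q : ℝ) - 1) * (Real.exp (2 * β * (1 - (q : ℝ) * a) / ((q : ℝ) - 1)) *
          (2 * β * (-(q : ℝ)) / ((q : ℝ) - 1)))) /
        (1 + ((q : ℝ) - 1) * Real.exp (2 * β * (1 - (q : ℝ) * a) / ((q : ℝ) - 1))) ^ 2 := by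
      rw [heq]
    rw [this]
    exact h8
  have hD' : -1 + 2 * β / (q : ℝ) < 0 := by
    have : 2 * β / (q : ℝ) < 1 := by
      rw [div_lt_one hq0]; linarith
    linarith
  -- slope argument
  have hslope := hasDerivAt_iff_tendsto_slope.mp hD
  have hev : ∀ᶠ x in nhdsWithin a {a}ᶜ, slope (fun x => Dfun q β x) a x < 0 :=
    hslope.eventually_lt_const hD'
  have hev' : ∀ᶠ x in nhdsWithin a (Set.Ioi a), slope (fun x => Dfun q β x) a x < 0 :=
    hev.filter_mono (nhdsWithin_mono a (fun x hx => ne_of_gt hx))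
  have hneg : ∀ᶠ x in nhdsWithin a (Set.Ioi a), Dfun q β x < 0 := by
    filter_upwards [hev', self_mem_nhdsWithin] with x hx hxa
    have hxa' : 0 < x - a := sub_pos.mpr hxa
    have : (Dfun q β x - Dfun q β a) / (x - a) < 0 := by
      simpa [slope_def_field, div_eq_iff, hDa] using hx
    have := (div_neg_iff.mp this)
    rcases this with ⟨h1, h2⟩ | ⟨h1, h2⟩
    · linarith
    · rw [hDa] at h1; linarith
  obtain ⟨u, hu, hsub⟩ := mem_nhdsGT_iff_exists_Ioo_subset.mp hneg
  have hua : a < u := hu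
  refine ⟨⟨u - a, by linarith, fun x hx => hsub ⟨hx.1, by linarith [hx.2]⟩⟩, ?_⟩
  -- now sSharp > 1/q
  rw [sSharp]
  split_ifs with hne
  · refine lt_of_lt_of_le hua (le_csInf hne ?_)
    rintro s ⟨⟨hs1, hs2⟩, hsD⟩
    by_contra hlt
    push_neg at hlt
    have : Dfun q β s < 0 := hsub ⟨hs1, hlt⟩
    linarith
  · show a < 1
    rw [ha, div_lt_one hq0]; exact hq1
end

section
/- Let q ≥ 3 be an integer and let 0 ≤ β < q/2. Define s^♯(β) = inf{s ∈ (1/q, 1] : D_β(s) ≥ 0} and s*(β) = sup{s ∈ [1/q, 1) : (d/ds) D_β(s) = 0}, where in each case the value is 1 if the corresponding set is empty. Then the following are equivalent: (a) s^♯(β) = 1; (b) D_β has no zeros in (1/q, 1]; (c) D_β(s*(β)) < 0. -/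
open scoped Classical in
/-- `s*(β) = sup {s ∈ [1/q,1) : (d/ds) D_β(s) = 0}`, with the convention that
the supremum of the empty set is `1`. -/
noncomputable def sStar (q : ℕ) (β : ℝ) : ℝ :=
  if {s : ℝ | s ∈ Set.Ico (1 / (q : ℝ)) 1 ∧ deriv (fun x => Dfun q β x) s = 0}.Nonempty then
    sSup {s : ℝ | s ∈ Set.Ico (1 / (q : ℝ)) 1 ∧ deriv (fun x => Dfun q β x) s = 0}
  else 1

lemma Tpos (q : ℕ) (hq : 3 ≤ q) (β x : ℝ) :
    0 < ((q : ℝ) - 1) * Real.exp (2 * β * (1 - (q : ℝ) * x) / ((q : ℝ) - 1)) := by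
  have hQ : (3:ℝ) ≤ (q:ℝ) := by exact_mod_cast hq
  have : (0:ℝ) < (q:ℝ) - 1 := by linarith
  positivity

lemma Dfun_hasDerivAt (q : ℕ) (hq : 3 ≤ q) (β x : ℝ) :
    HasDerivAt (fun x => Dfun q β x)
      (-1 + (2*β*(q:ℝ)/((q:ℝ)-1)) * (((q:ℝ)-1) * Real.exp (2 * β * (1 - (q : ℝ) * x) / ((q : ℝ) - 1)) /
        (1 + ((q:ℝ)-1) * Real.exp (2 * β * (1 - (q : ℝ) * x) / ((q : ℝ) - 1)))^2)) x := by
  have hQ : (3:ℝ) ≤ (q:ℝ) := by exact_mod_cast hq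
  have hQ1 : (0:ℝ) < (q:ℝ) - 1 := by linarith
  have hT := Tpos q hq β x
  have hne : 1 + ((q:ℝ)-1) * Real.exp (2 * β * (1 - (q : ℝ) * x) / ((q : ℝ) - 1)) ≠ 0 := by
    positivity
  have hlin : HasDerivAt (fun x : ℝ => 2 * β * (1 - (q:ℝ) * x) / ((q:ℝ) - 1))
      (2 * β * (-((q:ℝ)*1)) / ((q:ℝ)-1)) x :=
    ((((hasDerivAt_id x).const_mul ((q:ℝ))).const_sub 1).const_mul (2*β)).div_const ((q:ℝ)-1)
  have h4 := (hasDerivAt_id x).neg.add ((((hlin.exp).const_mul ((q:ℝ)-1)).const_add 1).inv hne)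
  refine h4.congr_deriv ?_
  ring

lemma Dfun_deriv (q : ℕ) (hq : 3 ≤ q) (β x : ℝ) :
    deriv (fun x => Dfun q β x) x =
      -1 + (2*β*(q:ℝ)/((q:ℝ)-1)) * (((q:ℝ)-1) * Real.exp (2 * β * (1 - (q : ℝ) * x) / ((q : ℝ) - 1)) /
        (1 + ((q:ℝ)-1) * Real.exp (2 * β * (1 - (q : ℝ) * x) / ((q : ℝ) - 1)))^2) :=
  (Dfun_hasDerivAt q hq β x).deriv

lemma Dfun_continuous (q : ℕ) (hq : 3 ≤ q) (β : ℝ) : Continuous (fun x => Dfun q β x) :=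
  (Differentiable.continuous fun x => (Dfun_hasDerivAt q hq β x).differentiableAt)

lemma Dfun_deriv_continuous (q : ℕ) (hq : 3 ≤ q) (β : ℝ) :
    Continuous (fun x => deriv (fun x => Dfun q β x) x) := by
  have hQ : (3:ℝ) ≤ (q:ℝ) := by exact_mod_cast hq
  have hQ1 : (0:ℝ) < (q:ℝ) - 1 := by linarith
  simp only [Dfun_deriv q hq]
  have hTc : Continuous (fun x : ℝ => ((q:ℝ)-1) * Real.exp (2 * β * (1 - (q:ℝ) * x) / ((q:ℝ) - 1))) := by
    fun_prop
  apply Continuous.add continuous_const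
  apply Continuous.mul continuous_const
  apply Continuous.div hTc (by fun_prop)
  intro x
  have := Tpos q hq β x
  positivity

lemma Dfun_inv_q (q : ℕ) (hq : 3 ≤ q) (β : ℝ) : Dfun q β (1/(q:ℝ)) = 0 := by
  have hQ : (3:ℝ) ≤ (q:ℝ) := by exact_mod_cast hq
  have hq0 : (q:ℝ) ≠ 0 := by linarith
  simp only [Dfun]
  rw [mul_one_div_cancel hq0]
  norm_num

lemma Dfun_one_neg (q : ℕ) (hq : 3 ≤ q) (β : ℝ) : Dfun q β 1 < 0 := by
  have hT := Tpos q hq β 1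
  have h1 : (1:ℝ) < 1 + ((q : ℝ) - 1) * Real.exp (2 * β * (1 - (q : ℝ) * 1) / ((q : ℝ) - 1)) := by
    linarith
  have := inv_lt_one_of_one_lt₀ h1
  simp only [Dfun]
  linarith

lemma Dfun_deriv_inv_q (q : ℕ) (hq : 3 ≤ q) (β : ℝ) (hβ : β < (q:ℝ)/2) :
    deriv (fun x => Dfun q β x) (1/(q:ℝ)) < 0 := by
  have hQ : (3:ℝ) ≤ (q:ℝ) := by exact_mod_cast hq
  have hq0 : (q:ℝ) ≠ 0 := by linarith
  have hQ1 : (0:ℝ) < (q:ℝ) - 1 := by linarith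
  rw [Dfun_deriv q hq, mul_one_div_cancel hq0]
  norm_num
  have : 2 * β * (q:ℝ) / ((q:ℝ)-1) * (((q:ℝ)-1) / (q:ℝ)^2) = 2 * β / (q:ℝ) := by
    field_simp
  rw [this]
  rw [div_lt_one (by linarith : (0:ℝ) < (q:ℝ))]
  linarith

lemma quad_core (c ta t tb : ℝ) (h1 : tb ≤ t) (h2 : t ≤ ta)
    (ha : (1+ta)^2 ≤ c*ta) (hb : (1+tb)^2 ≤ c*tb) : (1+t)^2 ≤ c*t := by
  rcases eq_or_lt_of_le (h1.trans h2) with he | hlt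
  · have : t = ta := le_antisymm h2 (he ▸ h1)
    rw [this]; exact ha
  · nlinarith [mul_nonneg (sub_nonneg.2 h1) (by linarith : (0:ℝ) ≤ c*ta - (1+ta)^2),
      mul_nonneg (sub_nonneg.2 h2) (by linarith : (0:ℝ) ≤ c*tb - (1+tb)^2),
      mul_nonneg (mul_nonneg (sub_nonneg.2 (le_of_lt hlt)) (sub_nonneg.2 h2)) (sub_nonneg.2 h1)]

lemma deriv_nonneg_between (q : ℕ) (hq : 3 ≤ q) (β : ℝ) (hβ0 : 0 ≤ β)
    {a x b : ℝ} (hax : a ≤ x) (hxb : x ≤ b)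
    (ha : 0 ≤ deriv (fun x => Dfun q β x) a) (hb : 0 ≤ deriv (fun x => Dfun q β x) b) :
    0 ≤ deriv (fun x => Dfun q β x) x := by
  have hQ : (3:ℝ) ≤ (q:ℝ) := by exact_mod_cast hq
  have hQ1 : (0:ℝ) < (q:ℝ) - 1 := by linarith
  set c := 2*β*(q:ℝ)/((q:ℝ)-1) with hcdef
  set T : ℝ → ℝ := fun y => ((q:ℝ)-1) * Real.exp (2 * β * (1 - (q : ℝ) * y) / ((q : ℝ) - 1)) with hTdef
  have hTpos : ∀ y, 0 < T y := fun y => Tpos q hq β y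
  have hTmono : ∀ {u v : ℝ}, u ≤ v → T v ≤ T u := by
    intro u v huv
    have : 2 * β * (1 - (q : ℝ) * v) / ((q : ℝ) - 1) ≤ 2 * β * (1 - (q : ℝ) * u) / ((q : ℝ) - 1) := by
      gcongr
    exact mul_le_mul_of_nonneg_left (Real.exp_le_exp.2 this) (by linarith)
  have key : ∀ y : ℝ, (0 ≤ deriv (fun x => Dfun q β x) y) ↔ (1 + T y)^2 ≤ c * T y := by
    intro y
    rw [Dfun_deriv q hq]
    have hP : (0:ℝ) < (1 + T y)^2 := by have := hTpos y; positivity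
    constructor
    · intro h
      have h1 : (1:ℝ) ≤ c * T y / (1 + T y)^2 := by
        rw [mul_div_assoc]; linarith
      calc (1 + T y)^2 = 1 * (1+T y)^2 := (one_mul _).symm
        _ ≤ (c * T y / (1 + T y)^2) * (1+T y)^2 := mul_le_mul_of_nonneg_right h1 hP.le
        _ = c * T y := by rw [div_mul_cancel₀ _ hP.ne']
    · intro h
      have h1 : (1:ℝ) ≤ c * T y / (1 + T y)^2 := (one_le_div hP).2 h
      rw [mul_div_assoc] at h1; linarith
  exact (key x).2 (quad_core c (T a) (T x) (T b) (hTmono hxb) (hTmono hax)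
    ((key a).1 ha) ((key b).1 hb))

/-- (Proposition 3.1, part 3): for `q ≥ 3` and `0 ≤ β < q/2`, the following are
equivalent: (a) `s^♯(β) = 1`; (b) `D_β` has no zeros in `(1/q,1]`;
(c) `D_β(s*(β)) < 0`. -/
theorem sSharp_sStar_tfae (q : ℕ) (hq : 3 ≤ q) (β : ℝ)
    (hβ0 : 0 ≤ β) (hβ : β < (q : ℝ) / 2) :
    (sSharp q β = 1 ↔ ∀ s ∈ Set.Ioc (1 / (q : ℝ)) 1, Dfun q β s ≠ 0) ∧
    ((∀ s ∈ Set.Ioc (1 / (q : ℝ)) 1, Dfun q β s ≠ 0) ↔ Dfun q β (sStar q β) < 0) := by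
  have hQ : (3:ℝ) ≤ (q:ℝ) := by exact_mod_cast hq
  have hq1 : 1/(q:ℝ) < 1 := by
    rw [div_lt_one (by linarith : (0:ℝ) < (q:ℝ))]; linarith
  have hcont := Dfun_continuous q hq β
  have hdiff : Differentiable ℝ (fun x => Dfun q β x) :=
    fun x => (Dfun_hasDerivAt q hq β x).differentiableAt
  have hD1 : Dfun q β 1 < 0 := Dfun_one_neg q hq β
  have hnegOf : (∀ s ∈ Set.Ioc (1/(q:ℝ)) 1, Dfun q β s ≠ 0) →
      ∀ s ∈ Set.Ioc (1/(q:ℝ)) 1, Dfun q β s < 0 := by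
    intro hz s hs
    rcases lt_trichotomy (Dfun q β s) 0 with h|h|h
    · exact h
    · exact absurd h (hz s hs)
    · exfalso
      have h0 : (0:ℝ) ∈ Set.Icc (Dfun q β 1) (Dfun q β s) := ⟨hD1.le, h.le⟩
      obtain ⟨z, hz1, hz2⟩ := intermediate_value_Icc' hs.2 hcont.continuousOn h0
      exact hz z ⟨lt_of_lt_of_le hs.1 hz1.1, hz1.2⟩ hz2
  constructor
  · constructor
    · intro h1 s hs hzero
      have hs1 : s < 1 := lt_of_le_of_ne hs.2 (by rintro rfl; exact hD1.ne hzero)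
      have hmem : s ∈ {s : ℝ | s ∈ Set.Ioc (1/(q:ℝ)) 1 ∧ 0 ≤ Dfun q β s} := ⟨hs, hzero.ge⟩
      have hne : {s : ℝ | s ∈ Set.Ioc (1/(q:ℝ)) 1 ∧ 0 ≤ Dfun q β s}.Nonempty := ⟨s, hmem⟩
      have hbdd : BddBelow {s : ℝ | s ∈ Set.Ioc (1/(q:ℝ)) 1 ∧ 0 ≤ Dfun q β s} :=
        ⟨1/(q:ℝ), fun x hx => hx.1.1.le⟩
      have hle : sSharp q β ≤ s := by
        rw [sSharp, if_pos hne]; exact csInf_le hbdd hmem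
      rw [h1] at hle
      linarith
    · intro hz
      rw [sSharp, if_neg]
      rintro ⟨s, hs, hsD⟩
      exact absurd hsD (not_le.2 (hnegOf hz s hs))
  · constructor
    · intro hz
      apply hnegOf hz
      rw [sStar]
      split_ifs with h
      · obtain ⟨z, hzmem⟩ := h
        have hzq : 1/(q:ℝ) < z := by
          rcases lt_or_eq_of_le hzmem.1.1 with h' | h'
          · exact h'
          · exfalso
            rw [← h'] at hzmem
            exact (Dfun_deriv_inv_q q hq β hβ).ne hzmem.2
        have hbdd : BddAbove {s : ℝ | s ∈ Set.Ico (1/(q:ℝ)) 1 ∧ deriv (fun x => Dfun q β x) s = 0} :=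
          ⟨1, fun x hx => hx.1.2.le⟩
        exact ⟨lt_of_lt_of_le hzq (le_csSup hbdd hzmem),
          csSup_le ⟨z, hzmem⟩ (fun x hx => hx.1.2.le)⟩
      · exact ⟨hq1, le_refl 1⟩
    · intro hlt s hs hds
      have hs1 : s < 1 := lt_of_le_of_ne hs.2 (by rintro rfl; exact hD1.ne hds)
      obtain ⟨c0, hc0mem, hc0⟩ := exists_deriv_eq_zero hs.1 hcont.continuousOn
        (by rw [Dfun_inv_q q hq, hds])
      set Z := {x : ℝ | x ∈ Set.Ico (1/(q:ℝ)) 1 ∧ deriv (fun x => Dfun q β x) x = 0} with hZdef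
      have hc0Z : c0 ∈ Z := ⟨⟨hc0mem.1.le, lt_trans hc0mem.2 hs1⟩, hc0⟩
      have hZne : Z.Nonempty := ⟨c0, hc0Z⟩
      have hZbdd : BddAbove Z := ⟨1, fun x hx => hx.1.2.le⟩
      have hstar_eq : sStar q β = sSup Z := by rw [sStar, if_pos hZne]
      have chain1 : ¬ (∀ y ∈ Set.Ioo c0 1, 0 ≤ deriv (fun x => Dfun q β x) y) := by
        intro hmono
        have hm : MonotoneOn (fun x => Dfun q β x) (Set.Icc c0 1) :=
          monotoneOn_of_deriv_nonneg (convex_Icc _ _) hcont.continuousOn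
            (fun y _ => (hdiff y).differentiableWithinAt)
            (fun y hy => by rw [interior_Icc] at hy; exact hmono y hy)
        have hle : Dfun q β s ≤ Dfun q β 1 :=
          hm ⟨hc0mem.2.le, hs1.le⟩ ⟨(hc0mem.2.trans hs1).le, le_refl 1⟩ hs1.le
        rw [hds] at hle
        linarith
      have hsup_ge : c0 ≤ sSup Z := le_csSup hZbdd hc0Z
      have hderiv_sup : deriv (fun x => Dfun q β x) (sSup Z) = 0 := by
        have hcl : sSup Z ∈ closure Z := csSup_mem_closure hZne hZbdd
        have hclosed : IsClosed {x : ℝ | deriv (fun x => Dfun q β x) x = 0} :=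
          isClosed_eq (Dfun_deriv_continuous q hq β) continuous_const
        exact closure_minimal (fun x hx => hx.2) hclosed hcl
      have claim : ∀ y, c0 ≤ y → y ≤ sSup Z → 0 ≤ deriv (fun x => Dfun q β x) y := by
        intro y hy1 hy2
        rcases eq_or_lt_of_le hy2 with he | hlt2
        · rw [he]; exact hderiv_sup.ge
        · obtain ⟨z, hzZ, hyz⟩ := exists_lt_of_lt_csSup hZne hlt2
          exact deriv_nonneg_between q hq β hβ0 hy1 hyz.le hc0.ge hzZ.2.ge
      rcases le_or_gt s (sSup Z) with hcase | hcase
      · have hm : MonotoneOn (fun x => Dfun q β x) (Set.Icc c0 (sSup Z)) :=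
          monotoneOn_of_deriv_nonneg (convex_Icc _ _) hcont.continuousOn
            (fun y _ => (hdiff y).differentiableWithinAt)
            (fun y hy => by rw [interior_Icc] at hy; exact claim y hy.1.le hy.2.le)
        have hle : Dfun q β s ≤ Dfun q β (sSup Z) :=
          hm ⟨hc0mem.2.le, hcase⟩ ⟨hsup_ge, le_refl _⟩ hcase
        rw [hds, ← hstar_eq] at hle
        linarith
      · have hnegder : ∀ y ∈ Set.Ioo (sSup Z) 1, deriv (fun x => Dfun q β x) y ≤ 0 := by
          intro y hy
          by_contra hpos
          push_neg at hpos
          have h_y1 : ∀ w, y ≤ w → w < 1 → 0 ≤ deriv (fun x => Dfun q β x) w := by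
            intro w hw1 hw2
            by_contra hw
            push_neg at hw
            have h0 : (0:ℝ) ∈ Set.Icc (deriv (fun x => Dfun q β x) w)
                (deriv (fun x => Dfun q β x) y) := ⟨hw.le, hpos.le⟩
            obtain ⟨z, hz1, hz2⟩ := intermediate_value_Icc' hw1
              (Dfun_deriv_continuous q hq β).continuousOn h0
            have hzZ : z ∈ Z := ⟨⟨by linarith [hz1.1, hy.1, hsup_ge, hc0mem.1],
              by linarith [hz1.2]⟩, hz2⟩
            have := le_csSup hZbdd hzZ
            linarith [hz1.1, hy.1]
          apply chain1
          intro w hw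
          rcases le_or_gt w y with h | h
          · exact deriv_nonneg_between q hq β hβ0 hw.1.le h hc0.ge hpos.le
          · exact h_y1 w h.le hw.2
        have ham : AntitoneOn (fun x => Dfun q β x) (Set.Icc (sSup Z) s) :=
          antitoneOn_of_deriv_nonpos (convex_Icc _ _) hcont.continuousOn
            (fun y _ => (hdiff y).differentiableWithinAt)
            (fun y hy => by
              rw [interior_Icc] at hy
              exact hnegder y ⟨hy.1, lt_trans hy.2 hs1⟩)
        have hle : Dfun q β s ≤ Dfun q β (sSup Z) :=
          ham ⟨le_refl _, hcase.le⟩ ⟨hcase.le, le_refl _⟩ hcase.le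
        rw [hds, ← hstar_eq] at hle
        linarith
end

section
/- For every integer q ≥ 3 one has 0 < β_s(q) < β_c(q) < q, where β_c(q) = (q−1)log(q−1)/(q−2). Moreover, for q = 2 (with β_c(2) = 1 and β_s(2) defined by the same supremum formula with q = 2) one has β_s(2) = β_c(2) = 1. -/
/-- The static critical inverse temperature `β_c(q) = (q−1)log(q−1)/(q−2)`
for `q ≥ 3`, with `β_c(2) = 1`. -/
noncomputable def betaC (q : ℕ) : ℝ :=
  if q = 2 then 1 else ((q : ℝ) - 1) * Real.log ((q : ℝ) - 1) / ((q : ℝ) - 2)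

open Real Set
lemma denom_pos {q : ℕ} (hq : 2 ≤ q) (y : ℝ) :
    0 < 1 + ((q : ℝ) - 1) * Real.exp y := by
  have h2 : (2:ℝ) ≤ (q:ℝ) := by exact_mod_cast hq
  nlinarith [Real.exp_pos y]

lemma dfun_lt_zero_iff {q : ℕ} (hq : 2 ≤ q) {β x : ℝ} (hx0 : 0 < x) (hx1 : x < 1) :
    Dfun q β x < 0 ↔
      Real.log ((1 - x) / (((q : ℝ) - 1) * x)) < 2 * β * (1 - (q : ℝ) * x) / ((q : ℝ) - 1) := by
  have hq2 : (2:ℝ) ≤ (q:ℝ) := by exact_mod_cast hq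
  set t := 2 * β * (1 - (q : ℝ) * x) / ((q : ℝ) - 1) with ht
  have hq1 : (0:ℝ) < (q:ℝ) - 1 := by linarith
  have hE : 0 < Real.exp t := Real.exp_pos t
  have h1A : 0 < 1 + ((q:ℝ)-1) * Real.exp t := denom_pos hq t
  have hr : 0 < (1 - x) / (((q : ℝ) - 1) * x) := by
    apply div_pos (by linarith) (by positivity)
  rw [Real.log_lt_iff_lt_exp hr]
  unfold Dfun
  rw [← ht]
  constructor
  · intro h
    have h2 : (1 + ((q:ℝ)-1)*Real.exp t)⁻¹ < x := by linarith
    rw [← one_div, div_lt_iff₀ h1A] at h2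
    rw [div_lt_iff₀ (by positivity : (0:ℝ) < ((q:ℝ)-1)*x)]
    nlinarith
  · intro h
    rw [div_lt_iff₀ (by positivity : (0:ℝ) < ((q:ℝ)-1)*x)] at h
    have h2 : (1 + ((q:ℝ)-1)*Real.exp t)⁻¹ < x := by
      rw [← one_div, div_lt_iff₀ h1A]
      nlinarith
    linarith

lemma dfun_eq_zero_iff {q : ℕ} (hq : 2 ≤ q) {β x : ℝ} (hx0 : 0 < x) (hx1 : x < 1) :
    Dfun q β x = 0 ↔
      Real.log ((1 - x) / (((q : ℝ) - 1) * x)) = 2 * β * (1 - (q : ℝ) * x) / ((q : ℝ) - 1) := by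
  have hq2 : (2:ℝ) ≤ (q:ℝ) := by exact_mod_cast hq
  set t := 2 * β * (1 - (q : ℝ) * x) / ((q : ℝ) - 1) with ht
  have hq1 : (0:ℝ) < (q:ℝ) - 1 := by linarith
  have hE : 0 < Real.exp t := Real.exp_pos t
  have h1A : 0 < 1 + ((q:ℝ)-1) * Real.exp t := denom_pos hq t
  have hr : 0 < (1 - x) / (((q : ℝ) - 1) * x) := by
    apply div_pos (by linarith) (by positivity)
  unfold Dfun
  rw [← ht]
  constructor
  · intro h
    have h2 : (1 + ((q:ℝ)-1)*Real.exp t)⁻¹ = x := by linarith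
    have h3 : Real.exp t = (1 - x) / (((q : ℝ) - 1) * x) := by
      have h4 : x * (1 + ((q:ℝ)-1)*Real.exp t) = 1 := by
        rw [← h2]; field_simp
      rw [eq_div_iff (by positivity : ((q:ℝ)-1)*x ≠ 0)]
      nlinarith
    rw [← h3, Real.log_exp]
  · intro h
    have h3 : Real.exp t = (1 - x) / (((q : ℝ) - 1) * x) := by
      rw [← h, Real.exp_log hr]
    have h4 : Real.exp t * (((q:ℝ)-1)*x) = 1 - x := by
      rw [h3]; field_simp
    have h5 : (1 + ((q:ℝ)-1)*Real.exp t) * x = 1 := by nlinarith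
    have h6 : (1 + ((q:ℝ)-1)*Real.exp t)⁻¹ = x := by
      field_simp
      linarith [h5]
    linarith

lemma dfun_nonneg_iff {q : ℕ} (hq : 2 ≤ q) {β x : ℝ} (hx0 : 0 < x) (hx1 : x < 1) :
    0 ≤ Dfun q β x ↔
      2 * β * (1 - (q : ℝ) * x) / ((q : ℝ) - 1) ≤ Real.log ((1 - x) / (((q : ℝ) - 1) * x)) := by
  rw [← not_lt, dfun_lt_zero_iff hq hx0 hx1, not_lt]

lemma dfun_mono {q : ℕ} (hq : 2 ≤ q) {x : ℝ} (hx : 1 / (q:ℝ) < x) {β₁ β₂ : ℝ} (hβ : β₁ < β₂) :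
    Dfun q β₁ x < Dfun q β₂ x := by
  have hq2 : (2:ℝ) ≤ (q:ℝ) := by exact_mod_cast hq
  have hq0 : (0:ℝ) < (q:ℝ) := by linarith
  have hq1 : (0:ℝ) < (q:ℝ) - 1 := by linarith
  have hxq : 1 < x * (q:ℝ) := (div_lt_iff₀ hq0).mp hx
  have ht : 2 * β₂ * (1 - (q:ℝ)*x) / ((q:ℝ)-1) < 2 * β₁ * (1 - (q:ℝ)*x) / ((q:ℝ)-1) := by
    rw [div_lt_div_iff₀ hq1 hq1]
    have hu : 0 < (x*(q:ℝ)-1)*((q:ℝ)-1) := by nlinarith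
    nlinarith [mul_lt_mul_of_pos_right hβ hu]
  have hE := Real.exp_lt_exp.mpr ht
  unfold Dfun
  have h1 := denom_pos hq (2 * β₁ * (1 - (q:ℝ)*x) / ((q:ℝ)-1))
  have h2 := denom_pos hq (2 * β₂ * (1 - (q:ℝ)*x) / ((q:ℝ)-1))
  have hlt : 1 + ((q:ℝ)-1) * Real.exp (2 * β₂ * (1 - (q:ℝ)*x) / ((q:ℝ)-1))
      < 1 + ((q:ℝ)-1) * Real.exp (2 * β₁ * (1 - (q:ℝ)*x) / ((q:ℝ)-1)) := by nlinarith
  have := one_div_lt_one_div_of_lt h2 hlt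
  rw [one_div, one_div] at this
  linarith


lemma two_mul_le_log_sub (m : ℝ) (h0 : 0 ≤ m) (h1 : m < 1) :
    2 * m ≤ Real.log (1 + m) - Real.log (1 - m) := by
  set f : ℝ → ℝ := fun x => Real.log (1 + x) - Real.log (1 - x) - 2 * x with hf
  have hderiv : ∀ x ∈ Ioo (0:ℝ) 1, HasDerivAt f ((1+x)⁻¹ + (1-x)⁻¹ - 2) x := by
    intro x hx
    have hx1 : (0:ℝ) < 1 + x := by linarith [hx.1]
    have hx2 : (0:ℝ) < 1 - x := by linarith [hx.2]
    have h₁ : HasDerivAt (fun x : ℝ => Real.log (1 + x)) ((1+x)⁻¹ * 1) x := by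
      exact (Real.hasDerivAt_log hx1.ne').comp x ((hasDerivAt_id x).const_add 1)
    have h₂ : HasDerivAt (fun x : ℝ => Real.log (1 - x)) ((1-x)⁻¹ * (0 - 1)) x := by
      exact (Real.hasDerivAt_log hx2.ne').comp x ((hasDerivAt_const x 1).sub (hasDerivAt_id x))
    have h₃ : HasDerivAt (fun x : ℝ => 2 * x) 2 x := by
      simpa using (hasDerivAt_id x).const_mul 2
    have := (h₁.sub h₂).sub h₃
    exact this.congr_deriv (by ring)
  rcases eq_or_lt_of_le h0 with rfl | hm0
  · simp
  have hmono : MonotoneOn f (Icc 0 m) := by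
    apply monotoneOn_of_deriv_nonneg (convex_Icc 0 m)
    · apply continuousOn_of_forall_continuousAt
      intro x hx
      have hx1 : (0:ℝ) < 1 + x := by linarith [hx.1]
      have hx2 : (0:ℝ) < 1 - x := by linarith [hx.2, h1]
      have c1 : ContinuousAt (fun x : ℝ => Real.log (1 + x)) x :=
        (Real.continuousAt_log hx1.ne').comp (by fun_prop)
      have c2 : ContinuousAt (fun x : ℝ => Real.log (1 - x)) x :=
        (Real.continuousAt_log hx2.ne').comp (by fun_prop)
      exact (c1.sub c2).sub (by fun_prop)
    · intro x hx
      rw [interior_Icc] at hx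
      exact ((hderiv x ⟨hx.1, lt_of_lt_of_le hx.2 h1.le⟩).differentiableAt).differentiableWithinAt
    · intro x hx
      rw [interior_Icc] at hx
      have hx' : x ∈ Ioo (0:ℝ) 1 := ⟨hx.1, lt_of_lt_of_le hx.2 h1.le⟩
      rw [(hderiv x hx').deriv]
      have hx1 : (0:ℝ) < 1 + x := by linarith [hx'.1]
      have hx2 : (0:ℝ) < 1 - x := by linarith [hx'.2]
      have key : 2 ≤ (1+x)⁻¹ + (1-x)⁻¹ := by
        rw [inv_eq_one_div, inv_eq_one_div, div_add_div _ _ hx1.ne' hx2.ne', le_div_iff₀ (by positivity)]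
        nlinarith [sq_nonneg x]
      linarith
  have h0m : (0:ℝ) ∈ Icc (0:ℝ) m := ⟨le_refl 0, h0⟩
  have hmm : m ∈ Icc (0:ℝ) m := ⟨h0, le_refl m⟩
  have := hmono h0m hmm h0
  simp only [hf] at this
  simp at this
  linarith


lemma dfun_continuous (q : ℕ) (hq : 2 ≤ q) (β : ℝ) : Continuous (Dfun q β) := by
  have h1 : Continuous fun x : ℝ => 1 + ((q:ℝ) - 1) * Real.exp (2 * β * (1 - (q:ℝ) * x) / ((q:ℝ) - 1)) := by
    fun_prop
  have h2 : ∀ x : ℝ, 1 + ((q:ℝ) - 1) * Real.exp (2 * β * (1 - (q:ℝ) * x) / ((q:ℝ) - 1)) ≠ 0 :=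
    fun x => (denom_pos hq _).ne'
  exact (continuous_id.neg).add (h1.inv₀ h2)

lemma exists_zero {q : ℕ} (hq : 2 ≤ q) {β x₀ : ℝ} (hβ : 0 ≤ β)
    (hx₀ : x₀ ∈ Set.Ioo (1 / (q:ℝ)) 1) (hD : 0 ≤ Dfun q β x₀) :
    ∃ z ∈ Set.Ioo (1 / (q:ℝ)) 1, Dfun q β z = 0 := by
  rcases eq_or_lt_of_le hD with heq | hpos
  · exact ⟨x₀, hx₀, heq.symm⟩
  have hq2 : (2:ℝ) ≤ (q:ℝ) := by exact_mod_cast hq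
  have hq0 : (0:ℝ) < (q:ℝ) := by linarith
  have hq1 : (0:ℝ) < (q:ℝ) - 1 := by linarith
  have hx01 : x₀ < 1 := hx₀.2
  have hx0q : 1 / (q:ℝ) < x₀ := hx₀.1
  have hx0pos : 0 < x₀ := lt_trans (by positivity) hx0q
  set L : ℝ := (1 + ((q:ℝ) - 1) * Real.exp (2 * β * (1 - (q:ℝ) * 1) / ((q:ℝ) - 1)))⁻¹ with hL
  have hL1 : L < 1 := by
    rw [hL]
    have h1A := denom_pos hq (2 * β * (1 - (q:ℝ) * 1) / ((q:ℝ) - 1))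
    have : 1 < 1 + ((q:ℝ) - 1) * Real.exp (2 * β * (1 - (q:ℝ) * 1) / ((q:ℝ) - 1)) := by
      nlinarith [Real.exp_pos (2 * β * (1 - (q:ℝ) * 1) / ((q:ℝ) - 1))]
    exact inv_lt_one_of_one_lt₀ this
  set y : ℝ := (max x₀ L + 1) / 2 with hy
  have hmax1 : max x₀ L < 1 := max_lt hx01 hL1
  have hyx : x₀ < y := by
    have := le_max_left x₀ L
    rw [hy]; linarith
  have hy1 : y < 1 := by rw [hy]; linarith
  have hyL : L < y := by
    have := le_max_right x₀ L
    rw [hy]; linarith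
  have hfy : Dfun q β y < 0 := by
    have hmono : Real.exp (2 * β * (1 - (q:ℝ) * 1) / ((q:ℝ) - 1))
        ≤ Real.exp (2 * β * (1 - (q:ℝ) * y) / ((q:ℝ) - 1)) := by
      apply Real.exp_le_exp.mpr
      have hnum : 2 * β * (1 - (q:ℝ) * 1) ≤ 2 * β * (1 - (q:ℝ) * y) := by nlinarith [mul_nonneg (mul_nonneg hβ hq0.le) (by linarith : (0:ℝ) ≤ 1 - y)]
      exact div_le_div_of_nonneg_right hnum hq1.le
    have h1 := denom_pos hq (2 * β * (1 - (q:ℝ) * y) / ((q:ℝ) - 1))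
    have h2 := denom_pos hq (2 * β * (1 - (q:ℝ) * 1) / ((q:ℝ) - 1))
    have hle : 1 + ((q:ℝ) - 1) * Real.exp (2 * β * (1 - (q:ℝ) * 1) / ((q:ℝ) - 1))
        ≤ 1 + ((q:ℝ) - 1) * Real.exp (2 * β * (1 - (q:ℝ) * y) / ((q:ℝ) - 1)) := by
      nlinarith
    have hinv : (1 + ((q:ℝ) - 1) * Real.exp (2 * β * (1 - (q:ℝ) * y) / ((q:ℝ) - 1)))⁻¹ ≤ L := by
      rw [hL]
      exact inv_anti₀ h2 hle
    unfold Dfun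
    linarith
  have hcont : ContinuousOn (Dfun q β) (Icc x₀ y) := (dfun_continuous q hq β).continuousOn
  have h0mem : (0:ℝ) ∈ Ioo (Dfun q β y) (Dfun q β x₀) := ⟨hfy, hpos⟩
  obtain ⟨z, hz, hz0⟩ := intermediate_value_Ioo' hyx.le hcont h0mem
  exact ⟨z, ⟨lt_trans hx0q hz.1, lt_trans hz.2 hy1⟩, hz0⟩
set_option maxHeartbeats 1000000 in
lemma main_q3 (q : ℕ) (hq : 3 ≤ q) :
    0 < betaS q ∧ betaS q < betaC q ∧ betaC q < (q : ℝ) := by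
  have hq2 : 2 ≤ q := by omega
  have hQ3 : (3:ℝ) ≤ (q:ℝ) := by exact_mod_cast hq
  have hQ0 : (0:ℝ) < (q:ℝ) := by linarith
  have hQ1 : (0:ℝ) < (q:ℝ) - 1 := by linarith
  have hQ2 : (0:ℝ) < (q:ℝ) - 2 := by linarith
  have hbc : betaC q = ((q:ℝ)-1) * Real.log ((q:ℝ)-1) / ((q:ℝ)-2) := by
    unfold betaC; rw [if_neg (by omega)]
  set S := {β : ℝ | 0 ≤ β ∧ ∀ x ∈ Set.Ioo (1 / (q : ℝ)) 1, Dfun q β x ≠ 0} with hSdef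
  have hS : betaS q = sSup S := rfl
  -- the special point X and temperature B
  set X : ℝ := (3*(q:ℝ) - 2)/(4*(q:ℝ)) with hXdef
  have hX : X ∈ Ioo (1/(q:ℝ)) 1 := by
    constructor
    · rw [hXdef, div_lt_div_iff₀ hQ0 (by linarith)]
      nlinarith
    · rw [hXdef, div_lt_one (by linarith)]
      linarith
  have hX0 : 0 < X := lt_trans (by positivity) hX.1
  have hX1 : X < 1 := hX.2
  set L : ℝ := ((q:ℝ)-1)*(3*(q:ℝ)-2)/((q:ℝ)+2) with hLdef
  have hL1 : 1 < L := by
    rw [hLdef, lt_div_iff₀ (by linarith)]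
    nlinarith
  have hlogL : 0 < Real.log L := Real.log_pos hL1
  set B : ℝ := (2*((q:ℝ)-1)/(3*((q:ℝ)-2))) * Real.log L with hBdef
  have hB0 : 0 < B := by
    apply mul_pos (by positivity) hlogL
  -- Dfun q B X = 0
  have hDB : Dfun q B X = 0 := by
    rw [dfun_eq_zero_iff hq2 hX0 hX1]
    have harg : (1 - X)/(((q:ℝ)-1)*X) = L⁻¹ := by
      rw [hXdef, hLdef]
      field_simp
      ring
    rw [harg, Real.log_inv]
    rw [hXdef, hBdef]
    field_simp
    ring
  -- upper bound for S
  have hub : ∀ β ∈ S, β ≤ B := by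
    intro β hβ
    by_contra hlt
    push_neg at hlt
    have hpos : 0 < Dfun q β X := by
      have := dfun_mono hq2 hX.1 hlt
      rw [hDB] at this
      exact this
    obtain ⟨z, hz, hz0⟩ := exists_zero hq2 (le_of_lt (lt_trans hB0 hlt)) hX hpos.le
    exact hβ.2 z hz hz0
  -- 1/2 ∈ S
  have hhalf : (1/2 : ℝ) ∈ S := by
    refine ⟨by norm_num, ?_⟩
    intro x hx
    have hx0 : 0 < x := lt_trans (by positivity) hx.1
    have hx1 : x < 1 := hx.2
    have hxq : 1 < (q:ℝ) * x := by
      have := (div_lt_iff₀ hQ0).mp hx.1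
      nlinarith
    apply ne_of_lt
    rw [dfun_lt_zero_iff hq2 hx0 hx1]
    have hr : 0 < (1 - x) / (((q:ℝ)-1)*x) := div_pos (by linarith) (by positivity)
    have hlog := Real.log_le_sub_one_of_pos hr
    have hre : (1 - x) / (((q:ℝ)-1)*x) - 1 = (1 - (q:ℝ)*x)/(((q:ℝ)-1)*x) := by
      field_simp
      ring
    rw [hre] at hlog
    have hstep1 : (1 - (q:ℝ)*x)/(((q:ℝ)-1)*x) < (1 - (q:ℝ)*x)/((q:ℝ)-1) := by
      rw [div_lt_div_iff₀ (by positivity) hQ1]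
      nlinarith [mul_pos (mul_pos (by linarith : (0:ℝ) < (q:ℝ)*x - 1) hQ1) (by linarith : (0:ℝ) < 1 - x)]
    have hstep2 : (1 - (q:ℝ)*x)/((q:ℝ)-1) ≤ 2 * (1/2) * (1 - (q:ℝ)*x)/((q:ℝ)-1) := by
      norm_num
    linarith
  have hBdd : BddAbove S := ⟨B, hub⟩
  have h1 : (1/2:ℝ) ≤ betaS q := by
    rw [hS]; exact le_csSup hBdd hhalf
  have h2 : betaS q ≤ B := by
    rw [hS]; exact csSup_le ⟨1/2, hhalf⟩ hub
  have hBc : B < betaC q := by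
    rw [hbc]
    have hLsq : L^2 < ((q:ℝ)-1)^3 := by
      rw [hLdef, div_pow, div_lt_iff₀ (by positivity)]
      nlinarith [mul_pos (pow_pos hQ1 2) (mul_pos (mul_pos hQ2 hQ2) hQ2)]
    have hlog : 2 * Real.log L < 3 * Real.log ((q:ℝ)-1) := by
      have := Real.log_lt_log (by positivity) hLsq
      rw [Real.log_pow, Real.log_pow] at this
      push_cast at this
      linarith
    calc B = (((q:ℝ)-1)/(3*((q:ℝ)-2))) * (2*Real.log L) := by rw [hBdef]; ring
      _ < (((q:ℝ)-1)/(3*((q:ℝ)-2))) * (3*Real.log ((q:ℝ)-1)) := by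
          exact mul_lt_mul_of_pos_left hlog (by positivity)
      _ = ((q:ℝ)-1) * Real.log ((q:ℝ)-1) / ((q:ℝ)-2) := by
          field_simp
  have hcq : betaC q < (q:ℝ) := by
    rw [hbc]
    have hne : (q:ℝ) - 1 ≠ 1 := by linarith
    have hlog2 : Real.log ((q:ℝ)-1) < (q:ℝ)-2 := by
      have := Real.log_lt_sub_one_of_pos (by linarith : (0:ℝ) < (q:ℝ)-1) hne
      linarith
    rw [div_lt_iff₀ hQ2]
    nlinarith [Real.log_pos (by linarith : (1:ℝ) < (q:ℝ)-1)]
  exact ⟨by linarith, by linarith, hcq⟩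
set_option maxHeartbeats 1000000 in
lemma main_q2 : betaS 2 = 1 := by
  have hc2 : ((2:ℕ):ℝ) = 2 := by norm_num
  set S := {β : ℝ | 0 ≤ β ∧ ∀ x ∈ Set.Ioo (1 / ((2:ℕ) : ℝ)) 1, Dfun 2 β x ≠ 0} with hSdef
  have hS : betaS 2 = sSup S := rfl
  -- membership of all β ∈ [0,1)
  have hlb : ∀ β : ℝ, 0 ≤ β → β < 1 → β ∈ S := by
    intro β hβ0 hβ1
    refine ⟨hβ0, ?_⟩
    intro x hx
    have hx2 : 1/2 < x := by
      have := hx.1; rwa [hc2] at this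
    have hx1 : x < 1 := hx.2
    have hx0 : 0 < x := by linarith
    set m : ℝ := 2*x - 1 with hmdef
    have hm0 : 0 < m := by rw [hmdef]; linarith
    have hm1 : m < 1 := by rw [hmdef]; linarith
    apply ne_of_lt
    rw [dfun_lt_zero_iff (le_refl 2) hx0 hx1]
    rw [hc2]
    have hrr : (1 - x)/((2 - 1)*x) = (1-m)/(1+m) := by
      rw [hmdef]; field_simp; ring
    rw [hrr, Real.log_div (by linarith) (by linarith)]
    have hkey := two_mul_le_log_sub m hm0.le hm1
    have hT : 2*β*(1 - 2*x)/(2-1) = -(2*β*m) := by rw [hmdef]; ring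
    rw [hT]
    have : β * m < m := by nlinarith
    linarith
  -- no β > 1 in S
  have hub : ∀ β ∈ S, β ≤ 1 := by
    intro β hβmem
    by_contra hgt
    push_neg at hgt
    set m : ℝ := min ((2*β-2)/(2*β-1)) (1/2) with hmdef
    have hb1 : (0:ℝ) < 2*β - 1 := by linarith
    have hb2 : (0:ℝ) < 2*β - 2 := by linarith
    have hm0 : 0 < m := lt_min (div_pos hb2 hb1) (by norm_num)
    have hm2 : m ≤ 1/2 := min_le_right _ _
    have hmβ : m*(2*β-1) ≤ 2*β-2 := by
      have h := min_le_left ((2*β-2)/(2*β-1)) (1/2)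
      rw [← hmdef] at h
      calc m*(2*β-1) ≤ ((2*β-2)/(2*β-1))*(2*β-1) := by
            exact mul_le_mul_of_nonneg_right h hb1.le
        _ = 2*β-2 := by field_simp
    set x₀ : ℝ := (1+m)/2 with hx₀def
    have hx₀0 : 0 < x₀ := by rw [hx₀def]; linarith
    have hx₀1 : x₀ < 1 := by rw [hx₀def]; linarith
    have hx₀mem : x₀ ∈ Ioo (1/((2:ℕ):ℝ)) 1 := by
      rw [hc2]
      exact ⟨by rw [hx₀def]; linarith, hx₀1⟩
    have h1m : (0:ℝ) < 1 - m := by linarith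
    -- key log inequality
    have hlog1 : Real.log (1+m) ≤ m := by
      have := Real.log_le_sub_one_of_pos (by linarith : (0:ℝ) < 1+m)
      linarith
    have hlog2 : -Real.log (1-m) ≤ (1-m)⁻¹ - 1 := by
      have := Real.log_le_sub_one_of_pos (show (0:ℝ) < (1-m)⁻¹ by positivity)
      rwa [Real.log_inv] at this
    have hinv : (1:ℝ)/(1-m) ≤ 2*β*m - m + 1 := by
      rw [div_le_iff₀ h1m]
      nlinarith [mul_le_mul_of_nonneg_left hmβ hm0.le]
    have hkey : Real.log (1+m) - Real.log (1-m) ≤ 2*β*m := by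
      rw [← one_div] at hlog2
      linarith
    have hD : 0 ≤ Dfun 2 β x₀ := by
      rw [dfun_nonneg_iff (le_refl 2) hx₀0 hx₀1, hc2]
      have hrr : (1 - x₀)/((2 - 1)*x₀) = (1-m)/(1+m) := by
        rw [hx₀def]; field_simp; ring
      rw [hrr, Real.log_div h1m.ne' (by linarith : (1:ℝ)+m ≠ 0)]
      have hT : 2*β*(1 - 2*x₀)/(2-1) = -(2*β*m) := by rw [hx₀def]; ring
      rw [hT]
      linarith
    obtain ⟨z, hz, hz0⟩ := exists_zero (le_refl 2) (by linarith : (0:ℝ) ≤ β) hx₀mem hD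
    exact hβmem.2 z hz hz0
  -- conclude
  have h0S : (0:ℝ) ∈ S := hlb 0 le_rfl one_pos
  have hBdd : BddAbove S := ⟨1, hub⟩
  rw [hS]
  apply le_antisymm (csSup_le ⟨0, h0S⟩ hub)
  by_contra h
  push_neg at h
  have hs0 : 0 ≤ sSup S := le_csSup hBdd h0S
  set γ : ℝ := (sSup S + 1)/2 with hγdef
  have hγ : γ ∈ S := hlb γ (by rw [hγdef]; linarith) (by rw [hγdef]; linarith)
  have := le_csSup hBdd hγ
  rw [hγdef] at this
  linarith

/-- (Proposition 3.2): for every integer `q ≥ 3`, `0 < β_s(q) < β_c(q) < q`;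
moreover for `q = 2` one has `β_s(2) = β_c(2) = 1`. -/
theorem betaS_lt_betaC :
    (∀ q : ℕ, 3 ≤ q → 0 < betaS q ∧ betaS q < betaC q ∧ betaC q < (q : ℝ)) ∧
    betaS 2 = 1 ∧ betaC 2 = 1 := by
  refine ⟨main_q3, main_q2, ?_⟩
  unfold betaC
  simp
end

section
/- Let (X_t)_{t≥0} be a real-valued discrete-time process on a probability space, adapted to a filtration (F_t)_{t≥0}, with X_0 = x_0 almost surely, |X_{t+1} − X_t| ≤ R almost surely for all t (for some R > 0), and E[X_{t+1} − X_t | F_t] ≤ −δ on the event {X_t ≥ 0} for all t, where δ > 0. Let τ₀⁻ = inf{t ≥ 0 : X_t ≤ 0}. Then for every integer t₁ ≥ 1 with δ t₁ ≥ x₀, P(τ₀⁻ > t₁) ≤ exp(−(δ t₁ − x₀)²/(8 t₁ R²)). -/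
open MeasureTheory


lemma exp_le_cosh_add_sinh_mul {c z l : ℝ} (hc : 0 < c) (hz : |z| ≤ c) :
    Real.exp (l * z) ≤ Real.cosh (l * c) + (Real.sinh (l * c) / c) * z := by
  obtain ⟨hz1, hz2⟩ := abs_le.mp hz
  have h1 : (0:ℝ) ≤ (c - z) / (2 * c) := div_nonneg (by linarith) (by positivity)
  have h2 : (0:ℝ) ≤ (c + z) / (2 * c) := div_nonneg (by linarith) (by positivity)
  have hc2 : (2:ℝ) * c ≠ 0 := by positivity
  have hsum : (c - z) / (2 * c) + (c + z) / (2 * c) = 1 := by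
    field_simp
    ring
  have hcvx := convexOn_exp.2 (Set.mem_univ (-(l * c))) (Set.mem_univ (l * c)) h1 h2 hsum
  simp only [smul_eq_mul] at hcvx
  have harg : (c - z) / (2 * c) * (-(l * c)) + (c + z) / (2 * c) * (l * c) = l * z := by
    rw [div_mul_eq_mul_div, div_mul_eq_mul_div, ← add_div, div_eq_iff hc2]
    ring
  rw [harg] at hcvx
  refine hcvx.trans (le_of_eq ?_)
  rw [Real.cosh_eq, Real.sinh_eq]
  field_simp
  ring

/-- **Hitting-time estimate for supermartingales** (Lemma 2.1, part 1).
If `(X_t)` is adapted, starts at `x₀`, has increments bounded by `R`, and has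
conditional drift at most `−δ < 0` on the event `{X_t ≥ 0}`, then for every
integer `t₁ ≥ 1` with `δ t₁ ≥ x₀`, the probability that `X` stays strictly
positive up to time `t₁` (i.e. `τ₀⁻ > t₁`) is at most
`exp(−(δ t₁ − x₀)²/(8 t₁ R²))`. -/
theorem supermartingale_hitting_zero
    {Ω : Type*} {m : MeasurableSpace Ω} {μ : Measure Ω} [IsProbabilityMeasure μ]
    (F : Filtration ℕ m) (X : ℕ → Ω → ℝ) (hadapt : Adapted F X)
    (x₀ R δ : ℝ) (hR : 0 < R) (hδ : 0 < δ)
    (h0 : ∀ᵐ ω ∂μ, X 0 ω = x₀)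
    (hbd : ∀ t : ℕ, ∀ᵐ ω ∂μ, |X (t + 1) ω - X t ω| ≤ R)
    (hdrift : ∀ t : ℕ, ∀ᵐ ω ∂μ, 0 ≤ X t ω → (μ[X (t + 1) - X t|F t]) ω ≤ -δ)
    (t₁ : ℕ) (ht₁ : 1 ≤ t₁) (hx : x₀ ≤ δ * t₁) :
    (μ {ω | ∀ s ≤ t₁, 0 < X s ω}).toReal ≤
      Real.exp (-(δ * t₁ - x₀) ^ 2 / (8 * t₁ * R ^ 2)) := by
  have hexp_pos : (0:ℝ) < Real.exp (-(δ * t₁ - x₀) ^ 2 / (8 * t₁ * R ^ 2)) := Real.exp_pos _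
  -- measurability of each X t
  have hXm : ∀ t, Measurable (X t) := fun t =>
    (Measurable.mono (hadapt t) (F.le t) le_rfl)
  -- case x₀ ≤ 0 : the set is null
  by_cases hx0 : x₀ ≤ 0
  · have hnull : μ {ω | ∀ s ≤ t₁, 0 < X s ω} = 0 := by
      have hsub : {ω | ∀ s ≤ t₁, 0 < X s ω} ⊆ {ω | 0 < X 0 ω} :=
        fun ω hω => hω 0 (Nat.zero_le _)
      refine measure_mono_null hsub ?_
      have : ∀ᵐ ω ∂μ, ¬ (0 < X 0 ω) := by
        filter_upwards [h0] with ω hω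
        rw [hω]; linarith
      exact measure_eq_zero_iff_ae_notMem.mpr this
    rw [hnull]
    simpa using hexp_pos.le
  push_neg at hx0
  -- integrability of the X t
  have hXbd : ∀ t, ∀ᵐ ω ∂μ, |X t ω| ≤ |x₀| + t * R := by
    intro t
    induction t with
    | zero => filter_upwards [h0] with ω hω; simp [hω]
    | succ t ih =>
        filter_upwards [ih, hbd t] with ω h1 h2
        have : |X (t+1) ω| ≤ |X t ω| + R := by
          calc |X (t+1) ω| = |X t ω + (X (t+1) ω - X t ω)| := by ring_nf
            _ ≤ |X t ω| + |X (t+1) ω - X t ω| := abs_add_le _ _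
            _ ≤ |X t ω| + R := by linarith
        push_cast
        linarith
  have hXint : ∀ t, Integrable (X t) μ := by
    intro t
    refine (integrable_const (|x₀| + t * R)).mono' (hXm t).aestronglyMeasurable ?_
    filter_upwards [hXbd t] with ω hω
    simpa using hω
  -- the increment and its integrability
  set Z : ℕ → Ω → ℝ := fun t => X (t + 1) - X t with hZdef
  have hZint : ∀ t, Integrable (Z t) μ := fun t => (hXint (t+1)).sub (hXint t)
  -- δ ≤ R
  have hδR : δ ≤ R := by
    have h1 : ∀ᵐ ω ∂μ, (μ[Z 0|F 0]) ω ≤ -δ := by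
      filter_upwards [hdrift 0, h0] with ω hd hω
      exact hd (by rw [hω]; linarith)
    have h2 : ∀ᵐ ω ∂μ, -R ≤ (μ[Z 0|F 0]) ω := by
      have hmono := condExp_mono (m := F 0) (integrable_const (-R)) (hZint 0)
        (by filter_upwards [hbd 0] with ω hω
            simpa [hZdef] using (abs_le.mp hω).1)
      rw [condExp_const (F.le 0)] at hmono
      exact hmono
    obtain ⟨ω, hω1, hω2⟩ := ((h1.and h2).exists)
    linarith
  -- parameters
  set a : ℝ := δ * t₁ - x₀ with hadef
  have ha : 0 ≤ a := by simp [hadef]; linarith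
  have ht₁R : (0:ℝ) < t₁ := by positivity
  set l : ℝ := a / (4 * t₁ * R ^ 2) with hldef
  have hl : 0 ≤ l := by positivity
  set c : ℝ := 2 * R with hcdef
  have hc : 0 < c := by positivity
  -- the events and the exponential process
  set A : ℕ → Set Ω := fun t => {ω | ∀ s ≤ t, 0 < X s ω} with hAdef
  have hAmeasF : ∀ t, MeasurableSet[F t] (A t) := by
    intro t
    have : A t = ⋂ s ∈ Set.Iic t, {ω | 0 < X s ω} := by
      ext ω; simp [hAdef, Set.mem_iInter]
    rw [this]
    refine MeasurableSet.biInter (Set.to_countable _) (fun s hs => ?_)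
    exact F.mono hs _ (measurableSet_lt measurable_const (hadapt s))
  have hAmeas : ∀ t, MeasurableSet (A t) := fun t => F.le t _ (hAmeasF t)
  set G : ℕ → Ω → ℝ := fun t => (A t).indicator
    (fun ω => Real.exp (l * (X t ω + δ * t))) with hGdef
  have hGmeas : ∀ t, Measurable (G t) := by
    intro t
    exact Measurable.indicator (by fun_prop) (hAmeas t)
  have hGnonneg : ∀ t ω, 0 ≤ G t ω := by
    intro t ω
    exact Set.indicator_nonneg (fun ω _ => (Real.exp_pos _).le) ω
  have hGint : ∀ t, Integrable (G t) μ := by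
    intro t
    refine (integrable_const (Real.exp (l * (|x₀| + t * R + δ * t)))).mono'
      (hGmeas t).aestronglyMeasurable ?_
    filter_upwards [hXbd t] with ω hω
    rw [Real.norm_eq_abs, abs_of_nonneg (hGnonneg t ω)]
    by_cases hmem : ω ∈ A t
    · rw [hGdef]
      simp only [Set.indicator_of_mem hmem]
      apply Real.exp_le_exp.mpr
      exact mul_le_mul_of_nonneg_left (by linarith [(abs_le.mp hω).2]) hl
    · rw [hGdef]; simp only [Set.indicator_of_notMem hmem]; positivity
  -- the shifted increment
  set Z' : ℕ → Ω → ℝ := fun t ω => Z t ω + δ with hZ'def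
  have hZ'bd : ∀ t, ∀ᵐ ω ∂μ, |Z' t ω| ≤ c := by
    intro t
    filter_upwards [hbd t] with ω hω
    obtain ⟨h1, h2⟩ := abs_le.mp hω
    rw [abs_le]
    constructor <;> simp only [hZ'def, hZdef, Pi.sub_apply, hcdef] <;> linarith
  have hZ'meas : ∀ t, Measurable (Z' t) := fun t =>
    (((hXm (t+1)).sub (hXm t)).add_const δ)
  have hZ'int : ∀ t, Integrable (Z' t) μ := fun t => (hZint t).add (integrable_const δ)
  have hEmeas : ∀ t, Measurable (fun ω => Real.exp (l * Z' t ω)) := by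
    intro t; fun_prop
  have hEint : ∀ t, Integrable (fun ω => Real.exp (l * Z' t ω)) μ := by
    intro t
    refine (integrable_const (Real.exp (l * c))).mono'
      (hEmeas t).aestronglyMeasurable ?_
    filter_upwards [hZ'bd t] with ω hω
    rw [Real.norm_eq_abs, abs_of_nonneg (Real.exp_pos _).le]
    exact Real.exp_le_exp.mpr (mul_le_mul_of_nonneg_left (abs_le.mp hω).2 hl)
  set K : ℝ := Real.exp (2 * l ^ 2 * R ^ 2) with hKdef
  have hK0 : 0 < K := Real.exp_pos _
  -- conditional exponential moment bound on the event A t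
  have hcondbd : ∀ t, ∀ᵐ ω ∂μ, ω ∈ A t →
      (μ[fun ω => Real.exp (l * Z' t ω)|F t]) ω ≤ K := by
    intro t
    have hpt : ∀ᵐ ω ∂μ, Real.exp (l * Z' t ω) ≤
        Real.cosh (l * c) + (Real.sinh (l * c) / c) * Z' t ω := by
      filter_upwards [hZ'bd t] with ω hω
      exact exp_le_cosh_add_sinh_mul hc hω
    have haffint : Integrable
        (fun ω => Real.cosh (l * c) + (Real.sinh (l * c) / c) * Z' t ω) μ :=
      (integrable_const _).add ((hZ'int t).const_mul _)
    have hmono := condExp_mono (m := F t) (hEint t) haffint hpt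
    have haff : μ[fun ω => Real.cosh (l * c) + (Real.sinh (l * c) / c) * Z' t ω|F t]
        =ᵐ[μ] fun ω => Real.cosh (l * c) + (Real.sinh (l * c) / c) * (μ[Z' t|F t]) ω := by
      have h1 := condExp_add (m := F t) (μ := μ)
        (integrable_const (Real.cosh (l * c))) ((hZ'int t).const_mul (Real.sinh (l * c) / c))
      have h2 := condExp_smul (m := F t) (μ := μ) (Real.sinh (l * c) / c) (Z' t)
      refine h1.trans ?_
      rw [condExp_const (F.le t)]
      filter_upwards [h2] with ω hω
      simp only [Pi.add_apply, Pi.smul_apply, smul_eq_mul] at *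
      rw [show (μ[(Real.sinh (l * c) / c) • Z' t|F t]) ω =
        (μ[fun ω => (Real.sinh (l * c) / c) * Z' t ω|F t]) ω from rfl] at hω
      rw [hω]
    have hZ'cond : μ[Z' t|F t] =ᵐ[μ]
        fun ω => (μ[fun ω => Z t ω|F t]) ω + δ := by
      have h1 := condExp_add (m := F t) (μ := μ) (hZint t) (integrable_const δ)
      have : Z' t = Z t + fun _ => δ := by funext ω; simp [hZ'def]
      rw [this]
      refine h1.trans ?_
      rw [condExp_const (F.le t)]
      filter_upwards with ω
      simp
    have hcosh : Real.cosh (l * c) ≤ K := by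
      refine (Real.cosh_le_exp_half_sq (l * c)).trans (le_of_eq ?_)
      rw [hKdef, hcdef]; ring_nf
    have hslope : 0 ≤ Real.sinh (l * c) / c :=
      div_nonneg (Real.sinh_nonneg_iff.mpr (by positivity)) hc.le
    filter_upwards [hmono, haff, hZ'cond, hdrift t] with ω h1 h2 h3 h4 hmem
    have hXt : (0:ℝ) ≤ X t ω := (hmem t le_rfl).le
    have h5 : (μ[fun ω => Z t ω|F t]) ω ≤ -δ := by
      have := h4 hXt
      exact this
    calc (μ[fun ω => Real.exp (l * Z' t ω)|F t]) ω
        ≤ Real.cosh (l * c) + (Real.sinh (l * c) / c) * (μ[Z' t|F t]) ω := by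
          rw [← h2]; exact h1
      _ ≤ Real.cosh (l * c) := by
          rw [h3]
          nlinarith [hslope, h5]
      _ ≤ K := hcosh
  -- the main inductive estimate
  have hkey : ∀ t, ∫ ω, G t ω ∂μ ≤ Real.exp (l * x₀) * K ^ t := by
    intro t
    induction t with
    | zero =>
        have hle : ∀ᵐ ω ∂μ, G 0 ω ≤ Real.exp (l * x₀) := by
          filter_upwards [h0] with ω hω
          by_cases hmem : ω ∈ A 0
          · rw [hGdef]
            simp only [Set.indicator_of_mem hmem]
            apply Real.exp_le_exp.mpr
            rw [hω]; push_cast; nlinarith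
          · rw [hGdef]
            simp only [Set.indicator_of_notMem hmem]
            positivity
        calc ∫ ω, G 0 ω ∂μ ≤ ∫ _, Real.exp (l * x₀) ∂μ :=
              integral_mono_ae (hGint 0) (integrable_const _) hle
          _ = Real.exp (l * x₀) := by simp
          _ ≤ Real.exp (l * x₀) * K ^ 0 := by simp
    | succ t ih =>
        set H : Ω → ℝ := G t * fun ω => Real.exp (l * Z' t ω) with hHdef
        have hHnonneg : ∀ ω, 0 ≤ H ω := fun ω =>
          mul_nonneg (hGnonneg t ω) (Real.exp_pos _).le
        have hHint : Integrable H μ := by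
          refine (integrable_const
            (Real.exp (l * (|x₀| + t * R + δ * t)) * Real.exp (l * c))).mono'
            ((hGmeas t).mul (hEmeas t)).aestronglyMeasurable ?_
          filter_upwards [hXbd t, hZ'bd t] with ω h1 h2
          rw [Real.norm_eq_abs, abs_of_nonneg (hHnonneg ω)]
          refine mul_le_mul ?_ ?_ (Real.exp_pos _).le (Real.exp_pos _).le
          · by_cases hmem : ω ∈ A t
            · rw [hGdef]
              simp only [Set.indicator_of_mem hmem]
              exact Real.exp_le_exp.mpr
                (mul_le_mul_of_nonneg_left (by linarith [(abs_le.mp h1).2]) hl)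
            · rw [hGdef]
              simp only [Set.indicator_of_notMem hmem]
              positivity
          · exact Real.exp_le_exp.mpr (mul_le_mul_of_nonneg_left (abs_le.mp h2).2 hl)
        have hGH : ∀ ω, G (t + 1) ω ≤ H ω := by
          intro ω
          by_cases hmem : ω ∈ A (t + 1)
          · have hmem' : ω ∈ A t := fun s hs => hmem s (hs.trans (Nat.le_succ t))
            simp only [hGdef, hHdef, Pi.mul_apply, Set.indicator_of_mem hmem,
              Set.indicator_of_mem hmem']
            rw [← Real.exp_add]
            apply le_of_eq
            congr 1
            simp only [hZ'def, hZdef, Pi.sub_apply]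
            push_cast
            ring
          · rw [hGdef]
            simp only [Set.indicator_of_notMem hmem]
            exact hHnonneg ω
        -- strong measurability of G t w.r.t. F t, with bound
        have hGF : StronglyMeasurable[F t] (G t) := by
          refine StronglyMeasurable.indicator ?_ (hAmeasF t)
          exact (Real.continuous_exp.comp_stronglyMeasurable
            (stronglyMeasurable_const.mul ((Measurable.stronglyMeasurable (hadapt t)).add stronglyMeasurable_const)))
        have hGbd' : ∀ᵐ ω ∂μ, ‖G t ω‖ ≤ Real.exp (l * (|x₀| + t * R + δ * t)) := by
          filter_upwards [hXbd t] with ω hω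
          rw [Real.norm_eq_abs, abs_of_nonneg (hGnonneg t ω)]
          by_cases hmem : ω ∈ A t
          · rw [hGdef]
            simp only [Set.indicator_of_mem hmem]
            exact Real.exp_le_exp.mpr
              (mul_le_mul_of_nonneg_left (by linarith [(abs_le.mp hω).2]) hl)
          · rw [hGdef]
            simp only [Set.indicator_of_notMem hmem]
            positivity
        have hpull := condExp_stronglyMeasurable_mul_of_bound (F.le t) hGF (hEint t)
          (Real.exp (l * (|x₀| + t * R + δ * t))) hGbd'
        have hae : μ[H|F t] ≤ᵐ[μ] fun ω => G t ω * K := by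
          filter_upwards [hpull, hcondbd t] with ω h1 h2
          rw [hHdef, h1, Pi.mul_apply]
          by_cases hmem : ω ∈ A t
          · exact mul_le_mul_of_nonneg_left (h2 hmem) (hGnonneg t ω)
          · rw [hGdef]
            simp [Set.indicator_of_notMem hmem]
        calc ∫ ω, G (t + 1) ω ∂μ ≤ ∫ ω, H ω ∂μ := integral_mono (hGint _) hHint hGH
          _ = ∫ ω, (μ[H|F t]) ω ∂μ := (integral_condExp (F.le t)).symm
          _ ≤ ∫ ω, G t ω * K ∂μ :=
              integral_mono_ae integrable_condExp ((hGint t).mul_const K) hae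
          _ = (∫ ω, G t ω ∂μ) * K := integral_mul_const _ _
          _ ≤ (Real.exp (l * x₀) * K ^ t) * K :=
              mul_le_mul_of_nonneg_right ih hK0.le
          _ = Real.exp (l * x₀) * K ^ (t + 1) := by rw [pow_succ]; ring
  -- lower bound for the integral of G t₁
  have hlower : Real.exp (l * (δ * t₁)) * (μ (A t₁)).toReal ≤ ∫ ω, G t₁ ω ∂μ := by
    have hle : ∀ ω, (A t₁).indicator (fun _ => Real.exp (l * (δ * t₁))) ω ≤ G t₁ ω := by
      intro ω
      by_cases hmem : ω ∈ A t₁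
      · rw [hGdef]
        simp only [Set.indicator_of_mem hmem]
        apply Real.exp_le_exp.mpr
        have : (0:ℝ) < X t₁ ω := hmem t₁ le_rfl
        exact mul_le_mul_of_nonneg_left (by linarith) hl
      · simp only [Set.indicator_of_notMem hmem]
        exact hGnonneg t₁ ω
    have h1 : ∫ ω, (A t₁).indicator (fun _ => Real.exp (l * (δ * t₁))) ω ∂μ
        = (μ (A t₁)).toReal * Real.exp (l * (δ * t₁)) := by
      rw [integral_indicator_const _ (hAmeas t₁)]
      simp [smul_eq_mul, measureReal_def]
    calc Real.exp (l * (δ * t₁)) * (μ (A t₁)).toReal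
        = ∫ ω, (A t₁).indicator (fun _ => Real.exp (l * (δ * t₁))) ω ∂μ := by
          rw [h1]; ring
      _ ≤ ∫ ω, G t₁ ω ∂μ :=
          integral_mono ((integrable_const _).indicator (hAmeas t₁)) (hGint t₁) hle
  -- put everything together
  show (μ (A t₁)).toReal ≤ Real.exp (-(δ * t₁ - x₀) ^ 2 / (8 * t₁ * R ^ 2))
  have hKpow : K ^ t₁ = Real.exp (2 * l ^ 2 * R ^ 2 * t₁) := by
    rw [hKdef, ← Real.exp_nat_mul]
    ring_nf
  have hfinal : (μ (A t₁)).toReal ≤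
      Real.exp (l * x₀ + 2 * l ^ 2 * R ^ 2 * t₁ - l * (δ * t₁)) := by
    rw [Real.exp_sub, le_div_iff₀ (Real.exp_pos _)]
    calc (μ (A t₁)).toReal * Real.exp (l * (δ * t₁))
        = Real.exp (l * (δ * t₁)) * (μ (A t₁)).toReal := mul_comm _ _
      _ ≤ ∫ ω, G t₁ ω ∂μ := hlower
      _ ≤ Real.exp (l * x₀) * K ^ t₁ := hkey t₁
      _ = Real.exp (l * x₀ + 2 * l ^ 2 * R ^ 2 * t₁) := by
          rw [hKpow, ← Real.exp_add]
  refine hfinal.trans (le_of_eq ?_)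
  congr 1
  rw [hldef, hadef]
  have hRn : R ≠ 0 := hR.ne'
  have htn : (t₁:ℝ) ≠ 0 := ht₁R.ne'
  field_simp
  ring
end

section
/- Let (X_t)_{t≥0} be a real-valued discrete-time process adapted to a filtration (F_t)_{t≥0}, with X_0 = x_0 ≤ 0 almost surely, |X_{t+1} − X_t| ≤ R almost surely for all t (for some R > 0), and E[X_{t+1} − X_t | F_t] ≤ 0 on the event {X_t ≥ 0} for all t. Let τ_{x₁}⁺ = inf{t ≥ 0 : X_t ≥ x₁}. Then for every x₁ > R and every integer t₂ ≥ 1, P(τ_{x₁}⁺ ≤ t₂) ≤ 2 exp(−(x₁ − R)²/(8 t₂ R²)). -/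
open MeasureTheory Real

/-- Scalar Hoeffding lemma core. -/
lemma hoeffding_scalar {a b : ℝ} (ha : 0 ≤ a) (hb : 0 ≤ b) (hab : a + b = 1) (u : ℝ) :
    (b - a) * u + Real.log (a * Real.exp u + b * Real.exp (-u)) ≤ u ^ 2 / 2 := by
  set φ : ℝ → ℝ := fun u => a * Real.exp u + b * Real.exp (-u) with hφdef
  have hφpos : ∀ u, 0 < φ u := by
    intro u
    rcases lt_or_eq_of_le ha with ha' | ha'
    · have := Real.exp_pos u
      have := Real.exp_pos (-u)
      positivity
    · have hb1 : b = 1 := by linarith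
      simp [hφdef, ← ha', hb1]
      exact Real.exp_pos _
  set ψ : ℝ → ℝ := fun u => a * Real.exp u - b * Real.exp (-u) with hψdef
  have hφd : ∀ u, HasDerivAt φ (ψ u) u := by
    intro u
    have h1 : HasDerivAt (fun u => Real.exp u) (Real.exp u) u := Real.hasDerivAt_exp u
    have h2 : HasDerivAt (fun u : ℝ => Real.exp (-u)) (-Real.exp (-u)) u := by
      simpa [Function.comp_def] using ((Real.hasDerivAt_exp (-u)).comp u ((hasDerivAt_id u).neg))
    simpa [hψdef, mul_comm, Pi.add_def, sub_eq_add_neg] using ((h1.const_mul a).add (h2.const_mul b))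
  have hψd : ∀ u, HasDerivAt ψ (φ u) u := by
    intro u
    have h1 : HasDerivAt (fun u => Real.exp u) (Real.exp u) u := Real.hasDerivAt_exp u
    have h2 : HasDerivAt (fun u : ℝ => Real.exp (-u)) (-Real.exp (-u)) u := by
      simpa [Function.comp_def] using ((Real.hasDerivAt_exp (-u)).comp u ((hasDerivAt_id u).neg))
    simpa [hφdef, hψdef, sub_eq_add_neg, Pi.add_def, Pi.sub_def, Pi.neg_def] using ((h1.const_mul a).sub (h2.const_mul b))
  -- f and its derivative g
  set f : ℝ → ℝ := fun u => u ^ 2 / 2 - ((b - a) * u + Real.log (φ u)) with hfdef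
  set g : ℝ → ℝ := fun u => u - (b - a) - ψ u / φ u with hgdef
  have hfd : ∀ u, HasDerivAt f (g u) u := by
    intro u
    have h1 : HasDerivAt (fun u : ℝ => u ^ 2 / 2) u u := by
      simpa using (hasDerivAt_pow 2 u).div_const 2
    have h2 : HasDerivAt (fun u : ℝ => (b - a) * u) (b - a) u := by
      simpa using (hasDerivAt_id u).const_mul (b - a)
    have h3 : HasDerivAt (fun u => Real.log (φ u)) (ψ u / φ u) u :=
      (hφd u).log (hφpos u).ne'
    simpa [hfdef, hgdef, sub_sub, Pi.add_def, Pi.sub_def] using h1.sub (h2.add h3)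
  have hgd : ∀ u, HasDerivAt g (1 - (φ u * φ u - ψ u * ψ u) / (φ u) ^ 2) u := by
    intro u
    have h3 : HasDerivAt (fun u => ψ u / φ u) ((φ u * φ u - ψ u * ψ u) / (φ u) ^ 2) u :=
      (hψd u).div (hφd u) (hφpos u).ne'
    have h1 : HasDerivAt (fun u : ℝ => u - (b - a)) 1 u := (hasDerivAt_id u).sub_const _
    simpa [hgdef, Pi.sub_def] using h1.sub h3
  have hgmono : Monotone g := by
    apply monotone_of_deriv_nonneg
    · intro u; exact (hgd u).differentiableAt
    · intro u
      rw [(hgd u).deriv]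
      have h4 : (φ u * φ u - ψ u * ψ u) / (φ u) ^ 2 ≤ 1 := by
        rw [div_le_one (pow_pos (hφpos u) 2)]
        nlinarith [sq_nonneg (ψ u)]
      linarith
  have hg0 : g 0 = 0 := by
    simp only [hgdef, hψdef, hφdef]
    rw [Real.exp_zero]
    field_simp
    ring_nf
    simp only [Real.exp_zero, mul_one, show b + a = 1 by linarith, inv_one]
    ring
  have hf0 : f 0 = 0 := by
    simp [hfdef, hφdef, hab]
  -- f is nonneg
  have key : 0 ≤ f u := by
    rcases le_or_gt 0 u with hu | hu
    · have hmono : MonotoneOn f (Set.Ici 0) := by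
        apply monotoneOn_of_deriv_nonneg (convex_Ici 0)
        · exact fun x _ => ((hfd x).differentiableAt).continuousAt.continuousWithinAt
        · exact fun x _ => ((hfd x).differentiableAt).differentiableWithinAt
        · intro x hx
          rw [(hfd x).deriv]
          rw [← hg0]
          exact hgmono (le_of_lt (by simpa using hx))
      have := hmono (Set.self_mem_Ici) (by exact hu) hu
      linarith [hf0]
    · have hanti : AntitoneOn f (Set.Iic 0) := by
        apply antitoneOn_of_deriv_nonpos (convex_Iic 0)
        · exact fun x _ => ((hfd x).differentiableAt).continuousAt.continuousWithinAt
        · exact fun x _ => ((hfd x).differentiableAt).differentiableWithinAt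
        · intro x hx
          rw [(hfd x).deriv]
          rw [← hg0]
          exact hgmono (le_of_lt (by simpa using hx))
      have := hanti (Set.mem_Iic.2 hu.le) (Set.self_mem_Iic) hu.le
      linarith [hf0]
  simp only [hfdef] at key
  linarith

lemma chord_exp {R : ℝ} (hR : 0 < R) {x : ℝ} (hx : |x| ≤ R) (l : ℝ) :
    Real.exp (l * x) ≤ (Real.exp (l * R) + Real.exp (-(l * R))) / 2
      + (Real.exp (l * R) - Real.exp (-(l * R))) / (2 * R) * x := by
  obtain ⟨hx1, hx2⟩ := abs_le.1 hx
  have h2R : (2 * R) ≠ 0 := by positivity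
  have ht1 : 0 ≤ (R - x) / (2 * R) := div_nonneg (by linarith) (by linarith)
  have ht2 : 0 ≤ (R + x) / (2 * R) := div_nonneg (by linarith) (by linarith)
  have hsum : (R - x) / (2 * R) + (R + x) / (2 * R) = 1 := by
    rw [← add_div, div_eq_one_iff_eq h2R]; ring
  have h := convexOn_exp.2 (Set.mem_univ (-(l * R))) (Set.mem_univ (l * R)) ht1 ht2 hsum
  simp only [smul_eq_mul] at h
  have harg : (R - x) / (2 * R) * (-(l * R)) + (R + x) / (2 * R) * (l * R) = l * x := by
    rw [div_mul_eq_mul_div, div_mul_eq_mul_div, ← add_div, div_eq_iff h2R]; ring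
  rw [harg] at h
  have : (R - x) / (2 * R) * Real.exp (-(l * R)) + (R + x) / (2 * R) * Real.exp (l * R)
      = (Real.exp (l * R) + Real.exp (-(l * R))) / 2
        + (Real.exp (l * R) - Real.exp (-(l * R))) / (2 * R) * x := by
    field_simp
    ring
  linarith

lemma hoeffding_scalar' {R : ℝ} (hR : 0 < R) {c : ℝ} (hc : |c| ≤ R) (l : ℝ) :
    Real.exp (-(l * c)) * ((Real.exp (l * R) + Real.exp (-(l * R))) / 2
      + (Real.exp (l * R) - Real.exp (-(l * R))) / (2 * R) * c)
      ≤ Real.exp (l ^ 2 * R ^ 2 / 2) := by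
  obtain ⟨hc1, hc2⟩ := abs_le.1 hc
  set a : ℝ := (R + c) / (2 * R) with hadef
  set b : ℝ := (R - c) / (2 * R) with hbdef
  have h2R : (2 * R) ≠ 0 := by positivity
  have ha : 0 ≤ a := div_nonneg (by linarith) (by linarith)
  have hb : 0 ≤ b := div_nonneg (by linarith) (by linarith)
  have hab : a + b = 1 := by
    rw [hadef, hbdef, ← add_div, div_eq_one_iff_eq h2R]; ring
  have key := hoeffding_scalar ha hb hab (l * R)
  have hP : 0 < a * Real.exp (l * R) + b * Real.exp (-(l * R)) := by
    rcases lt_or_eq_of_le ha with ha' | ha'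
    · have := Real.exp_pos (l * R); have := Real.exp_pos (-(l * R)); positivity
    · have hb1 : b = 1 := by linarith
      rw [← ha', hb1]; simpa using Real.exp_pos (-(l * R))
  have hexp := Real.exp_le_exp.2 key
  rw [Real.exp_add, Real.exp_log hP] at hexp
  have h1 : (b - a) * (l * R) = -(l * c) := by
    rw [hadef, hbdef, div_sub_div_same, div_mul_eq_mul_div, div_eq_iff h2R]; ring
  have h2 : a * Real.exp (l * R) + b * Real.exp (-(l * R))
      = (Real.exp (l * R) + Real.exp (-(l * R))) / 2
        + (Real.exp (l * R) - Real.exp (-(l * R))) / (2 * R) * c := by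
    rw [hadef, hbdef]
    field_simp
    ring
  have h3 : (l * R) ^ 2 / 2 = l ^ 2 * R ^ 2 / 2 := by ring
  rw [h1, h2, h3] at hexp
  exact hexp

lemma condexp_mgf_le {Ω : Type*} {m' m : MeasurableSpace Ω} {μ : Measure Ω} [IsProbabilityMeasure μ]
    (hm : m' ≤ m) {ξ : Ω → ℝ} (hξ : AEStronglyMeasurable ξ μ)
    {R : ℝ} (hR : 0 < R) (hbd : ∀ᵐ ω ∂μ, |ξ ω| ≤ R) (l : ℝ) :
    ∀ᵐ ω ∂μ, (μ[fun w => Real.exp (l * (ξ w - (μ[ξ|m']) w))|m']) ω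
      ≤ Real.exp (l ^ 2 * R ^ 2 / 2) := by
  have hξint : Integrable ξ μ :=
    Integrable.mono' (integrable_const R) hξ (by simpa [Real.norm_eq_abs] using hbd)
  set c : Ω → ℝ := μ[ξ|m'] with hcdef
  have hcm : StronglyMeasurable[m'] c := stronglyMeasurable_condExp
  have hcR : ∀ᵐ ω ∂μ, c ω ≤ R := by
    have h1 : c ≤ᵐ[μ] μ[fun _ => R|m'] :=
      condExp_mono hξint (integrable_const R) (hbd.mono fun ω h => (abs_le.1 h).2)
    rw [condExp_const hm] at h1
    exact h1
  have hcR' : ∀ᵐ ω ∂μ, -R ≤ c ω := by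
    have h1 : μ[fun _ => -R|m'] ≤ᵐ[μ] c :=
      condExp_mono (integrable_const (-R)) hξint (hbd.mono fun ω h => (abs_le.1 h).1)
    rw [condExp_const hm] at h1
    exact h1
  set α : ℝ := (Real.exp (l * R) + Real.exp (-(l * R))) / 2 with hαdef
  set β : ℝ := (Real.exp (l * R) - Real.exp (-(l * R))) / (2 * R) with hβdef
  -- factorization
  have hfact : (fun w => Real.exp (l * (ξ w - c w)))
      = (fun w => Real.exp (-(l * c w))) * fun w => Real.exp (l * ξ w) := by
    funext w
    simp only [Pi.mul_apply, ← Real.exp_add]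
    ring_nf
  have hf : StronglyMeasurable[m'] fun w => Real.exp (-(l * c w)) :=
    Real.continuous_exp.comp_stronglyMeasurable ((hcm.const_mul l).neg)
  have hg : Integrable (fun w => Real.exp (l * ξ w)) μ := by
    refine Integrable.mono' (integrable_const (Real.exp (|l| * R)))
      (Real.continuous_exp.comp_aestronglyMeasurable (hξ.const_mul l)) ?_
    filter_upwards [hbd] with ω hω
    rw [Real.norm_eq_abs, abs_of_pos (Real.exp_pos _), Real.exp_le_exp]
    calc l * ξ ω ≤ |l * ξ ω| := le_abs_self _
      _ = |l| * |ξ ω| := abs_mul _ _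
      _ ≤ |l| * R := by
          exact mul_le_mul_of_nonneg_left hω (abs_nonneg l)
  have hfg : Integrable ((fun w => Real.exp (-(l * c w))) * fun w => Real.exp (l * ξ w)) μ := by
    rw [← hfact]
    refine Integrable.mono' (integrable_const (Real.exp (|l| * (R + R))))
      (Real.continuous_exp.comp_aestronglyMeasurable
        (((hξ.sub ((hcm.mono hm).aestronglyMeasurable)).const_mul l))) ?_
    filter_upwards [hbd, hcR, hcR'] with ω hω h1 h2
    rw [Real.norm_eq_abs, abs_of_pos (Real.exp_pos _), Real.exp_le_exp]
    calc l * (ξ ω - c ω) ≤ |l| * |ξ ω - c ω| := by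
          calc l * (ξ ω - c ω) ≤ |l * (ξ ω - c ω)| := le_abs_self _
            _ = |l| * |ξ ω - c ω| := abs_mul _ _
      _ ≤ |l| * (R + R) := by
          refine mul_le_mul_of_nonneg_left ?_ (abs_nonneg l)
          have := abs_le.1 (abs_le.2 ⟨h2, h1⟩ : |c ω| ≤ R)  -- dummy
          rw [abs_sub_le_iff]
          constructor <;> nlinarith [abs_le.1 hω]
  have hpull : μ[fun w => Real.exp (l * (ξ w - c w))|m']
      =ᵐ[μ] (fun w => Real.exp (-(l * c w))) * μ[fun w => Real.exp (l * ξ w)|m'] := by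
    rw [hfact]
    exact condExp_mul_of_stronglyMeasurable_left hf hfg hg
  -- chord bound under condexp
  have haff : Integrable ((fun _ : Ω => α) + β • ξ) μ := (integrable_const α).add (hξint.smul β)
  have hchord : (fun w => Real.exp (l * ξ w)) ≤ᵐ[μ] (fun _ : Ω => α) + β • ξ := by
    filter_upwards [hbd] with ω hω
    simpa [hαdef, hβdef, smul_eq_mul] using chord_exp hR hω l
  have hmono : μ[fun w => Real.exp (l * ξ w)|m'] ≤ᵐ[μ] fun w => α + β * c w := by
    have h1 := condExp_mono (m := m') hg haff hchord
    have h2 : μ[(fun _ : Ω => α) + β • ξ|m'] =ᵐ[μ] fun w => α + β * c w := by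
      refine (condExp_add (integrable_const α) (hξint.smul β) m').trans ?_
      have h3 := condExp_smul (μ := μ) (m := m') β ξ
      filter_upwards [h3] with ω h3ω
      simp only [Pi.add_apply, condExp_const hm, h3ω, Pi.smul_apply, smul_eq_mul, hcdef]
    filter_upwards [h1, h2] with ω h1ω h2ω
    calc (μ[fun w => Real.exp (l * ξ w)|m']) ω ≤ (μ[(fun _ : Ω => α) + β • ξ|m']) ω := h1ω
      _ = α + β * c ω := h2ω
  -- combine
  filter_upwards [hpull, hmono, hcR, hcR'] with ω hpullω hmonoω h1 h2
  rw [hpullω]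
  simp only [Pi.mul_apply]
  calc Real.exp (-(l * c ω)) * (μ[fun w => Real.exp (l * ξ w)|m']) ω
      ≤ Real.exp (-(l * c ω)) * (α + β * c ω) :=
        mul_le_mul_of_nonneg_left hmonoω (Real.exp_pos _).le
    _ ≤ Real.exp (l ^ 2 * R ^ 2 / 2) := hoeffding_scalar' hR (abs_le.2 ⟨h2, h1⟩) l

lemma condexp_mgf_indicator_le {Ω : Type*} {m' m : MeasurableSpace Ω} {μ : Measure Ω}
    [IsProbabilityMeasure μ] (hm : m' ≤ m) {η : Ω → ℝ}
    (hη : AEStronglyMeasurable η μ) {C : ℝ} (hbd : ∀ᵐ ω ∂μ, |η ω| ≤ C)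
    {A : Set Ω} (hA : MeasurableSet[m'] A) {l K : ℝ} (hK : 1 ≤ K)
    (hmgf : ∀ᵐ ω ∂μ, (μ[fun w => Real.exp (l * η w)|m']) ω ≤ K) :
    ∀ᵐ ω ∂μ, (μ[fun w => Real.exp (l * A.indicator η w)|m']) ω ≤ K := by
  have hC : 0 ≤ C := by
    obtain ⟨ω, hω⟩ := hbd.exists
    exact le_trans (abs_nonneg _) hω
  have hg : Integrable (fun w => Real.exp (l * η w)) μ := by
    refine Integrable.mono' (integrable_const (Real.exp (|l| * C)))
      (Real.continuous_exp.comp_aestronglyMeasurable (hη.const_mul l)) ?_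
    filter_upwards [hbd] with ω hω
    rw [Real.norm_eq_abs, abs_of_pos (Real.exp_pos _), Real.exp_le_exp]
    calc l * η ω ≤ |l * η ω| := le_abs_self _
      _ = |l| * |η ω| := abs_mul _ _
      _ ≤ |l| * C := mul_le_mul_of_nonneg_left hω (abs_nonneg l)
  have hsplit : (fun w => Real.exp (l * A.indicator η w))
      = A.indicator (fun w => Real.exp (l * η w)) + Aᶜ.indicator (fun _ => 1) := by
    funext w
    by_cases hw : w ∈ A
    · simp [Set.indicator_of_mem hw, Set.indicator_of_notMem (by simpa using hw : w ∉ Aᶜ)]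
    · simp [Set.indicator_of_notMem hw, Set.indicator_of_mem (by simpa using hw : w ∈ Aᶜ)]
  have hA' : MeasurableSet[m] A := hm _ hA
  have hint1 : Integrable (A.indicator fun w => Real.exp (l * η w)) μ :=
    hg.indicator hA'
  have hint2 : Integrable (Aᶜ.indicator fun _ : Ω => (1 : ℝ)) μ :=
    (integrable_const 1).indicator hA'.compl
  have hadd : μ[fun w => Real.exp (l * A.indicator η w)|m']
      =ᵐ[μ] μ[A.indicator fun w => Real.exp (l * η w)|m'] + μ[Aᶜ.indicator fun _ => (1:ℝ)|m'] := by
    rw [hsplit]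
    exact condExp_add hint1 hint2 m'
  have hind1 : μ[A.indicator fun w => Real.exp (l * η w)|m']
      =ᵐ[μ] A.indicator (μ[fun w => Real.exp (l * η w)|m']) := condExp_indicator hg hA
  have hind2 : μ[Aᶜ.indicator fun _ => (1:ℝ)|m'] =ᵐ[μ] Aᶜ.indicator fun _ => (1:ℝ) := by
    have := condExp_indicator (μ := μ) (integrable_const (1:ℝ)) hA.compl
    rwa [condExp_const hm] at this
  filter_upwards [hadd, hind1, hind2, hmgf] with ω h1 h2 h3 h4
  rw [h1]
  simp only [Pi.add_apply]
  rw [h2, h3]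
  by_cases hw : ω ∈ A
  · rw [Set.indicator_of_mem hw, Set.indicator_of_notMem (by simpa using hw : ω ∉ Aᶜ)]
    simpa using h4
  · rw [Set.indicator_of_notMem hw, Set.indicator_of_mem (by simpa using hw : ω ∈ Aᶜ)]
    simpa using hK

lemma azuma_max_tail {Ω : Type*} {m : MeasurableSpace Ω} {μ : Measure Ω}
    [IsProbabilityMeasure μ] (F : Filtration ℕ m) (η : ℕ → Ω → ℝ) (C : ℝ)
    (hmeas : ∀ s, StronglyMeasurable[F (s + 1)] (η s))
    (hbd : ∀ s, ∀ᵐ ω ∂μ, |η s ω| ≤ C)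
    (l K : ℝ) (hl : 0 < l) (hK : 1 ≤ K)
    (hmgf : ∀ s, ∀ᵐ ω ∂μ, (μ[fun w => Real.exp (l * η s w)|F s]) ω ≤ K)
    (a : ℝ) (n : ℕ) :
    (μ {ω | ∃ s ≤ n, a ≤ ∑ j ∈ Finset.range s, η j ω}).toReal
      ≤ Real.exp (-(l * a)) * K ^ n := by
  classical
  have hC : 0 ≤ C := by
    obtain ⟨ω, hω⟩ := (hbd 0).exists
    exact le_trans (abs_nonneg _) hω
  have hK0 : 0 < K := lt_of_lt_of_le one_pos hK
  -- partial sums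
  set S : ℕ → Ω → ℝ := fun s ω => ∑ j ∈ Finset.range s, η j ω with hSdef
  have hSmeas : ∀ s, StronglyMeasurable[F s] (S s) := by
    intro s
    apply Finset.stronglyMeasurable_fun_sum
    intro j hj
    exact (hmeas j).mono (F.mono (Finset.mem_range.1 hj))
  -- the pre-hitting sets
  set B : ℕ → Set Ω := fun s => {ω | ∀ r ≤ s, S r ω < a} with hBdef
  have hB : ∀ s, MeasurableSet[F s] (B s) := by
    intro s
    have : B s = ⋂ (r : ℕ) (_ : r ≤ s), {ω | S r ω < a} := by
      ext ω; simp [hBdef]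
    rw [this]
    refine MeasurableSet.iInter fun r => MeasurableSet.iInter fun hr => ?_
    exact measurableSet_lt ((hSmeas r).mono (F.mono hr)).measurable measurable_const
  -- stopped increments
  set ζ : ℕ → Ω → ℝ := fun s => (B s).indicator (η s) with hζdef
  have hζmeas : ∀ s, StronglyMeasurable[F (s + 1)] (ζ s) := fun s =>
    (hmeas s).indicator (F.mono (Nat.le_succ s) _ (hB s))
  have hζbd : ∀ s, ∀ᵐ ω ∂μ, |ζ s ω| ≤ C := by
    intro s
    filter_upwards [hbd s] with ω hω
    by_cases hw : ω ∈ B s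
    · simp only [hζdef]
      rwa [Set.indicator_of_mem hw]
    · simp only [hζdef]
      rw [Set.indicator_of_notMem hw]; simpa using hC
  have hζmgf : ∀ s, ∀ᵐ ω ∂μ, (μ[fun w => Real.exp (l * ζ s w)|F s]) ω ≤ K := fun s =>
    condexp_mgf_indicator_le (F.le s) ((hmeas s).mono (F.le (s + 1))).aestronglyMeasurable
      (hbd s) (hB s) hK (hmgf s)
  -- stopped sums
  set T : ℕ → Ω → ℝ := fun k ω => ∑ j ∈ Finset.range k, ζ j ω with hTdef
  have hTmeas : ∀ k, StronglyMeasurable[F k] (T k) := by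
    intro k
    apply Finset.stronglyMeasurable_fun_sum
    intro j hj
    exact (hζmeas j).mono (F.mono (Finset.mem_range.1 hj))
  have hTbd : ∀ k, ∀ᵐ ω ∂μ, |T k ω| ≤ k * C := by
    intro k
    have h := ae_all_iff.2 hζbd
    filter_upwards [h] with ω hω
    calc |T k ω| ≤ ∑ j ∈ Finset.range k, |ζ j ω| := Finset.abs_sum_le_sum_abs _ _
      _ ≤ ∑ _j ∈ Finset.range k, C := Finset.sum_le_sum fun j _ => hω j
      _ = k * C := by simp [mul_comm]
  have hexpT_int : ∀ k, Integrable (fun ω => Real.exp (l * T k ω)) μ := by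
    intro k
    refine Integrable.mono' (integrable_const (Real.exp (|l| * (k * C))))
      (Real.continuous_exp.comp_aestronglyMeasurable
        ((((hTmeas k).mono (F.le k)).aestronglyMeasurable.const_mul l))) ?_
    filter_upwards [hTbd k] with ω hω
    rw [Real.norm_eq_abs, abs_of_pos (Real.exp_pos _), Real.exp_le_exp]
    calc l * T k ω ≤ |l * T k ω| := le_abs_self _
      _ = |l| * |T k ω| := abs_mul _ _
      _ ≤ |l| * (k * C) := mul_le_mul_of_nonneg_left hω (abs_nonneg l)
  -- the mgf induction
  have hI : ∀ k, ∫ ω, Real.exp (l * T k ω) ∂μ ≤ K ^ k := by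
    intro k
    induction k with
    | zero =>
        simp [hTdef]
    | succ k ih =>
        have hsplit : (fun ω => Real.exp (l * T (k + 1) ω))
            = (fun ω => Real.exp (l * T k ω)) * fun ω => Real.exp (l * ζ k ω) := by
          funext ω
          simp only [Pi.mul_apply, hTdef, Finset.sum_range_succ, ← Real.exp_add]
          ring_nf
        have hg : Integrable (fun ω => Real.exp (l * ζ k ω)) μ := by
          refine Integrable.mono' (integrable_const (Real.exp (|l| * C)))
            (Real.continuous_exp.comp_aestronglyMeasurable
              ((((hζmeas k).mono (F.le (k + 1))).aestronglyMeasurable.const_mul l))) ?_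
          filter_upwards [hζbd k] with ω hω
          rw [Real.norm_eq_abs, abs_of_pos (Real.exp_pos _), Real.exp_le_exp]
          calc l * ζ k ω ≤ |l * ζ k ω| := le_abs_self _
            _ = |l| * |ζ k ω| := abs_mul _ _
            _ ≤ |l| * C := mul_le_mul_of_nonneg_left hω (abs_nonneg l)
        have hfg : Integrable ((fun ω => Real.exp (l * T k ω)) * fun ω => Real.exp (l * ζ k ω)) μ := by
          rw [← hsplit]; exact hexpT_int (k + 1)
        have hfm : StronglyMeasurable[F k] fun ω => Real.exp (l * T k ω) :=
          Real.continuous_exp.comp_stronglyMeasurable ((hTmeas k).const_mul l)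
        have hpull := condExp_mul_of_stronglyMeasurable_left hfm hfg hg
        calc ∫ ω, Real.exp (l * T (k + 1) ω) ∂μ
            = ∫ ω, ((fun ω => Real.exp (l * T k ω)) * fun ω => Real.exp (l * ζ k ω)) ω ∂μ := by
              rw [← hsplit]
          _ = ∫ ω, (μ[(fun ω => Real.exp (l * T k ω)) * fun ω => Real.exp (l * ζ k ω)|F k]) ω ∂μ :=
              (integral_condExp (F.le k)).symm
          _ = ∫ ω, Real.exp (l * T k ω) * (μ[fun ω => Real.exp (l * ζ k ω)|F k]) ω ∂μ := by
              refine integral_congr_ae ?_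
              filter_upwards [hpull] with ω hω
              exact hω
          _ ≤ ∫ ω, Real.exp (l * T k ω) * K ∂μ := by
              refine integral_mono_ae ?_ ((hexpT_int k).mul_const K) ?_
              · exact integrable_condExp.congr hpull
              · filter_upwards [hζmgf k] with ω hω
                exact mul_le_mul_of_nonneg_left hω (Real.exp_pos _).le
          _ = (∫ ω, Real.exp (l * T k ω) ∂μ) * K := by rw [integral_mul_const]
          _ ≤ K ^ k * K := by
              refine mul_le_mul_of_nonneg_right ih hK0.le
          _ = K ^ (k + 1) := by ring
  -- the hitting inclusion
  have hsub : {ω | ∃ s ≤ n, a ≤ S s ω} ⊆ {ω | a ≤ T n ω} := by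
    intro ω hω
    obtain ⟨s, hsn, hsa⟩ := hω
    have hP : ∃ s, a ≤ S s ω := ⟨s, hsa⟩
    set τ := Nat.find hP with hτdef
    have hτn : τ ≤ n := le_trans (Nat.find_min' hP hsa) hsn
    have hτspec : a ≤ S τ ω := Nat.find_spec hP
    have hBiff : ∀ j, ω ∈ B j ↔ j < τ := by
      intro j
      constructor
      · intro hmem
        by_contra h
        push_neg at h
        exact absurd (hmem τ h) (not_lt.2 hτspec)
      · intro hj r hr
        exact lt_of_not_ge (Nat.find_min hP (lt_of_le_of_lt hr hj))
    have hval : ∀ j, ζ j ω = if j < τ then η j ω else 0 := by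
      intro j
      simp only [hζdef]
      by_cases h : j < τ
      · rw [Set.indicator_of_mem ((hBiff j).2 h), if_pos h]
      · rw [Set.indicator_of_notMem fun hmem => h ((hBiff j).1 hmem), if_neg h]
    have hTn : T n ω = S τ ω := by
      rw [hTdef]
      simp only []
      rw [Finset.sum_congr rfl fun j _ => hval j, ← Finset.sum_filter]
      have : (Finset.range n).filter (fun j => j < τ) = Finset.range τ := by
        ext j
        simp only [Finset.mem_filter, Finset.mem_range]
        omega
      rw [this]
    show a ≤ T n ω
    rw [hTn]
    exact hτspec
  -- Markov
  have hD : MeasurableSet {ω | a ≤ T n ω} :=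
    measurableSet_le measurable_const ((hTmeas n).mono (F.le n)).measurable
  have hmarkov : Real.exp (l * a) * (μ {ω | a ≤ T n ω}).toReal ≤ K ^ n := by
    have h1 : Real.exp (l * a) * (μ {ω | a ≤ T n ω}).toReal
        ≤ ∫ ω in {ω | a ≤ T n ω}, Real.exp (l * T n ω) ∂μ := by
      rw [mul_comm, ← smul_eq_mul, ← measureReal_def]
      refine setIntegral_ge_of_const_le hD (measure_ne_top μ _) ?_ ((hexpT_int n).integrableOn)
      intro ω hω
      exact Real.exp_le_exp.2 (mul_le_mul_of_nonneg_left hω hl.le)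
    have h2 : ∫ ω in {ω | a ≤ T n ω}, Real.exp (l * T n ω) ∂μ ≤ ∫ ω, Real.exp (l * T n ω) ∂μ :=
      setIntegral_le_integral (hexpT_int n)
        (Filter.Eventually.of_forall fun ω => (Real.exp_pos _).le)
    exact le_trans (le_trans h1 h2) (hI n)
  have hfinal : (μ {ω | ∃ s ≤ n, a ≤ S s ω}).toReal ≤ (μ {ω | a ≤ T n ω}).toReal :=
    ENNReal.toReal_mono (measure_ne_top μ _) (measure_mono hsub)
  calc (μ {ω | ∃ s ≤ n, a ≤ ∑ j ∈ Finset.range s, η j ω}).toReal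
      = (μ {ω | ∃ s ≤ n, a ≤ S s ω}).toReal := rfl
    _ ≤ (μ {ω | a ≤ T n ω}).toReal := hfinal
    _ ≤ Real.exp (-(l * a)) * K ^ n := by
        rw [Real.exp_neg]
        rw [inv_mul_eq_div, le_div_iff₀ (Real.exp_pos _)]
        calc (μ {ω | a ≤ T n ω}).toReal * Real.exp (l * a)
            = Real.exp (l * a) * (μ {ω | a ≤ T n ω}).toReal := by ring
          _ ≤ K ^ n := hmarkov

/-- **Hitting-time estimate** (Lemma 2.1, part 2). If `(X_t)` is adapted,
starts at `x₀ ≤ 0`, has increments bounded by `R`, and has nonpositive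
conditional drift on the event `{X_t ≥ 0}`, then for every `x₁ > R` and every
integer `t₂ ≥ 1`, `P(τ_{x₁}⁺ ≤ t₂) ≤ 2 exp(−(x₁ − R)²/(8 t₂ R²))`. -/
theorem supermartingale_no_upcrossing
    {Ω : Type*} {m : MeasurableSpace Ω} {μ : Measure Ω} [IsProbabilityMeasure μ]
    (F : Filtration ℕ m) (X : ℕ → Ω → ℝ) (hadapt : Adapted F X)
    (x₀ R : ℝ) (hR : 0 < R) (hx₀ : x₀ ≤ 0)
    (h0 : ∀ᵐ ω ∂μ, X 0 ω = x₀)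
    (hbd : ∀ t : ℕ, ∀ᵐ ω ∂μ, |X (t + 1) ω - X t ω| ≤ R)
    (hdrift : ∀ t : ℕ, ∀ᵐ ω ∂μ, 0 ≤ X t ω → (μ[X (t + 1) - X t|F t]) ω ≤ 0)
    (x₁ : ℝ) (hx₁ : R < x₁) (t₂ : ℕ) (ht₂ : 1 ≤ t₂) :
    (μ {ω | ∃ s ≤ t₂, x₁ ≤ X s ω}).toReal ≤
      2 * Real.exp (-(x₁ - R) ^ 2 / (8 * t₂ * R ^ 2)) := by
  classical
  -- the events where the process is nonnegative
  set A : ℕ → Set Ω := fun s => X s ⁻¹' Set.Ici 0 with hAdef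
  have hAmeas : ∀ s, MeasurableSet[F s] (A s) := fun s =>
    hadapt s measurableSet_Ici
  have hAmem : ∀ s ω, ω ∈ A s ↔ 0 ≤ X s ω := by
    intro s ω; simp [hAdef]
  -- the truncated increments
  set ξ : ℕ → Ω → ℝ := fun s => (A s).indicator (X (s + 1) - X s) with hξdef
  have hXsm : ∀ s, StronglyMeasurable[m] (X s) := fun s => (hadapt s).stronglyMeasurable.mono (F.le s)
  have hDint : ∀ s, Integrable (X (s + 1) - X s) μ := by
    intro s
    refine Integrable.mono' (integrable_const R)
      (((hXsm (s + 1)).sub (hXsm s)).aestronglyMeasurable) ?_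
    filter_upwards [hbd s] with ω hω
    simpa [Real.norm_eq_abs] using hω
  have hξsm : ∀ s, StronglyMeasurable[F (s + 1)] (ξ s) := fun s =>
    ((hadapt (s + 1)).stronglyMeasurable.sub ((hadapt s).stronglyMeasurable.mono (F.mono (Nat.le_succ s)))).indicator
      (F.mono (Nat.le_succ s) _ (hAmeas s))
  have hξaesm : ∀ s, AEStronglyMeasurable (ξ s) μ := fun s =>
    ((hξsm s).mono (F.le (s + 1))).aestronglyMeasurable
  have hξbd : ∀ s, ∀ᵐ ω ∂μ, |ξ s ω| ≤ R := by
    intro s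
    filter_upwards [hbd s] with ω hω
    simp only [hξdef]
    by_cases hw : ω ∈ A s
    · rw [Set.indicator_of_mem hw]; simpa using hω
    · rw [Set.indicator_of_notMem hw]; simpa using hR.le
  have hξint : ∀ s, Integrable (ξ s) μ := fun s =>
    Integrable.mono' (integrable_const R) (hξaesm s)
      (by filter_upwards [hξbd s] with ω hω; simpa [Real.norm_eq_abs] using hω)
  -- conditional drift of truncated increments is nonpositive
  have hcnonpos : ∀ s, ∀ᵐ ω ∂μ, (μ[ξ s|F s]) ω ≤ 0 := by
    intro s
    have hind := condExp_indicator (m := F s) (hDint s) (hAmeas s)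
    rw [hξdef]
    filter_upwards [hind, hdrift s] with ω h1 h2
    rw [h1]
    by_cases hw : ω ∈ A s
    · rw [Set.indicator_of_mem hw]
      exact h2 ((hAmem s ω).1 hw)
    · rw [Set.indicator_of_notMem hw]
  -- conditional expectation bound
  have hcbd : ∀ s, ∀ᵐ ω ∂μ, |(μ[ξ s|F s]) ω| ≤ R := by
    intro s
    have h1 : μ[ξ s|F s] ≤ᵐ[μ] μ[fun _ => R|F s] :=
      condExp_mono (hξint s) (integrable_const R)
        (by filter_upwards [hξbd s] with ω hω; exact (abs_le.1 hω).2)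
    have h2 : μ[fun _ => -R|F s] ≤ᵐ[μ] μ[ξ s|F s] :=
      condExp_mono (integrable_const (-R)) (hξint s)
        (by filter_upwards [hξbd s] with ω hω; exact (abs_le.1 hω).1)
    rw [condExp_const (F.le s)] at h1 h2
    filter_upwards [h1, h2] with ω hω1 hω2
    exact abs_le.2 ⟨hω2, hω1⟩
  -- centered increments
  set ζ : ℕ → Ω → ℝ := fun s w => ξ s w - (μ[ξ s|F s]) w with hζdef
  have hζmeas : ∀ s, StronglyMeasurable[F (s + 1)] (ζ s) := fun s =>
    (hξsm s).sub (stronglyMeasurable_condExp.mono (F.mono (Nat.le_succ s)))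
  have hζbd : ∀ s, ∀ᵐ ω ∂μ, |ζ s ω| ≤ 2 * R := by
    intro s
    filter_upwards [hξbd s, hcbd s] with ω h1 h2
    simp only [hζdef]
    calc |ξ s ω - (μ[ξ s|F s]) ω| ≤ |ξ s ω| + |(μ[ξ s|F s]) ω| := abs_sub _ _
      _ ≤ 2 * R := by linarith
  -- parameters
  set aa : ℝ := (x₁ - R) / 2 with haadef
  have haapos : 0 < aa := by rw [haadef]; linarith
  have ht₂pos : (0:ℝ) < (t₂ : ℝ) := by exact_mod_cast ht₂
  set l : ℝ := aa / (t₂ * R ^ 2) with hldef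
  have hl : 0 < l := by
    rw [hldef]; positivity
  set K : ℝ := Real.exp (l ^ 2 * R ^ 2 / 2) with hKdef
  have hK : 1 ≤ K := Real.one_le_exp (by positivity)
  -- conditional mgf bounds
  have hmgf1 : ∀ s, ∀ᵐ ω ∂μ, (μ[fun w => Real.exp (l * ζ s w)|F s]) ω ≤ K := fun s =>
    condexp_mgf_le (F.le s) (hξaesm s) hR (hξbd s) l
  have hmgf2 : ∀ s, ∀ᵐ ω ∂μ, (μ[fun w => Real.exp (l * -(ζ s w))|F s]) ω ≤ K := by
    intro s
    have h := condexp_mgf_le (F.le s) (hξaesm s) hR (hξbd s) (-l)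
    have hfun : (fun w => Real.exp (-l * (ξ s w - (μ[ξ s|F s]) w)))
        = fun w => Real.exp (l * -(ζ s w)) := by
      funext w; congr 1; simp only [hζdef]; ring
    have hexp : (-l) ^ 2 * R ^ 2 / 2 = l ^ 2 * R ^ 2 / 2 := by ring
    rw [hfun, hexp] at h
    exact h
  -- the two tail events
  set E1 : Set Ω := {ω | ∃ s ≤ t₂, aa ≤ ∑ j ∈ Finset.range s, ζ j ω} with hE1def
  set E2 : Set Ω := {ω | ∃ s ≤ t₂, aa ≤ ∑ j ∈ Finset.range s, -(ζ j ω)} with hE2def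
  have hA1 : (μ E1).toReal ≤ Real.exp (-(l * aa)) * K ^ t₂ :=
    azuma_max_tail F ζ (2 * R) hζmeas hζbd l K hl hK hmgf1 aa t₂
  have hA2 : (μ E2).toReal ≤ Real.exp (-(l * aa)) * K ^ t₂ :=
    azuma_max_tail F (fun s w => -(ζ s w)) (2 * R) (fun s => (hζmeas s).neg)
      (fun s => by filter_upwards [hζbd s] with ω hω; simpa using hω)
      l K hl hK hmgf2 aa t₂
  -- a.e. inclusion of the hitting event
  have hae : ∀ᵐ ω ∂μ, ω ∈ {ω | ∃ s ≤ t₂, x₁ ≤ X s ω} → ω ∈ E1 ∪ E2 := by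
    filter_upwards [h0, ae_all_iff.2 hbd, ae_all_iff.2 hcnonpos] with ω h0ω hbdω hcω
    intro hE
    obtain ⟨s, hst, hsx⟩ := hE
    have hP : ∃ s, x₁ ≤ X s ω := ⟨s, hsx⟩
    set τ := Nat.find hP with hτdef
    have hτt₂ : τ ≤ t₂ := le_trans (Nat.find_min' hP hsx) hst
    have hτx : x₁ ≤ X τ ω := Nat.find_spec hP
    -- telescoping over intervals where the process is nonnegative
    have htel : ∀ u t, u ≤ t → (∀ r, u ≤ r → r < t → 0 ≤ X r ω) →
        ∑ j ∈ Finset.Ico u t, ξ j ω = X t ω - X u ω := by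
      intro u t hut hpos
      induction t, hut using Nat.le_induction with
      | base => simp
      | succ t ht ih =>
          rw [Finset.sum_Ico_succ_top ht,
            ih (fun r h1 h2 => hpos r h1 (lt_trans h2 (Nat.lt_succ_self t)))]
          have hξval : ξ t ω = X (t + 1) ω - X t ω := by
            simp only [hξdef]
            rw [Set.indicator_of_mem ((hAmem t ω).2 (hpos t ht (Nat.lt_succ_self t)))]
            simp
          rw [hξval]; ring
    -- find a good starting index u ≤ τ with a large ξ-increase on [u, τ)
    have hgap : ∃ u ≤ τ, x₁ - R ≤ ∑ j ∈ Finset.Ico u τ, ξ j ω := by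
      by_cases hneg : ∃ r, r < τ ∧ X r ω < 0
      · obtain ⟨r0, hr0τ, hr0⟩ := hneg
        set σ := Nat.findGreatest (fun r => X r ω < 0) τ with hσdef
        have hσP : X σ ω < 0 :=
          Nat.findGreatest_spec (P := fun r => X r ω < 0) (le_of_lt hr0τ) hr0
        have hστ : σ < τ := by
          rcases lt_or_eq_of_le (Nat.findGreatest_le (P := fun r => X r ω < 0) τ) with h | h
          · exact h
          · exfalso; rw [← hσdef] at h; rw [h] at hσP; linarith
        have hafter : ∀ r, σ < r → r ≤ τ → 0 ≤ X r ω := by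
          intro r h1 h2
          by_contra hcon
          exact absurd (Nat.findGreatest_is_greatest (P := fun r => X r ω < 0) h1 h2)
            (by simpa using hcon)
        refine ⟨σ + 1, hστ, ?_⟩
        rw [htel (σ + 1) τ hστ
          (fun r h1 h2 => hafter r (Nat.lt_of_succ_le h1) (le_of_lt h2))]
        have hXu : X (σ + 1) ω ≤ R := by
          have := abs_le.1 (hbdω σ)
          linarith [this.2]
        linarith
      · push_neg at hneg
        refine ⟨0, Nat.zero_le τ, ?_⟩
        rw [htel 0 τ (Nat.zero_le τ) (fun r _ h2 => hneg r h2)]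
        rw [h0ω]
        linarith
    obtain ⟨u, huτ, hWgap⟩ := hgap
    -- pass to centered increments
    have hζgap : x₁ - R ≤ ∑ j ∈ Finset.Ico u τ, ζ j ω := by
      have hsplit : ∑ j ∈ Finset.Ico u τ, ζ j ω
          = (∑ j ∈ Finset.Ico u τ, ξ j ω) - ∑ j ∈ Finset.Ico u τ, (μ[ξ j|F j]) ω := by
        simp only [hζdef]
        rw [Finset.sum_sub_distrib]
      have hcle : ∑ j ∈ Finset.Ico u τ, (μ[ξ j|F j]) ω ≤ 0 :=
        Finset.sum_nonpos fun j _ => hcω j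
      rw [hsplit]
      linarith
    have hIco : ∑ j ∈ Finset.Ico u τ, ζ j ω
        = (∑ j ∈ Finset.range τ, ζ j ω) - ∑ j ∈ Finset.range u, ζ j ω :=
      Finset.sum_Ico_eq_sub _ huτ
    by_cases hu : ∑ j ∈ Finset.range u, ζ j ω ≤ -aa
    · right
      refine ⟨u, le_trans huτ hτt₂, ?_⟩
      rw [Finset.sum_neg_distrib]
      linarith
    · left
      refine ⟨τ, hτt₂, ?_⟩
      push_neg at hu
      have h2aa : x₁ - R = 2 * aa := by rw [haadef]; ring
      nlinarith [hζgap, hIco]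
  -- combine
  have hmeasure : μ {ω | ∃ s ≤ t₂, x₁ ≤ X s ω} ≤ μ E1 + μ E2 := by
    calc μ {ω | ∃ s ≤ t₂, x₁ ≤ X s ω} ≤ μ (E1 ∪ E2) := measure_mono_ae hae
      _ ≤ μ E1 + μ E2 := measure_union_le E1 E2
  have htoReal : (μ {ω | ∃ s ≤ t₂, x₁ ≤ X s ω}).toReal ≤ (μ E1).toReal + (μ E2).toReal := by
    rw [← ENNReal.toReal_add (measure_ne_top μ E1) (measure_ne_top μ E2)]
    exact ENNReal.toReal_mono
      (ENNReal.add_ne_top.2 ⟨measure_ne_top μ E1, measure_ne_top μ E2⟩) hmeasure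
  have hnum : Real.exp (-(l * aa)) * K ^ t₂
      = Real.exp (-(x₁ - R) ^ 2 / (8 * t₂ * R ^ 2)) := by
    rw [hKdef, ← Real.exp_nat_mul, ← Real.exp_add]
    congr 1
    rw [hldef, haadef]
    field_simp
    ring
  calc (μ {ω | ∃ s ≤ t₂, x₁ ≤ X s ω}).toReal
      ≤ (μ E1).toReal + (μ E2).toReal := htoReal
    _ ≤ Real.exp (-(l * aa)) * K ^ t₂ + Real.exp (-(l * aa)) * K ^ t₂ := add_le_add hA1 hA2
    _ = 2 * (Real.exp (-(l * aa)) * K ^ t₂) := by ring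
    _ = 2 * Real.exp (-(x₁ - R) ^ 2 / (8 * t₂ * R ^ 2)) := by rw [hnum]
end

section
/- Let (X_t)_{t≥0} be a real-valued discrete-time process adapted to a filtration (F_t)_{t≥0}, with X_0 = x_0 ≤ 0 almost surely, |X_{t+1} − X_t| ≤ R almost surely for all t (for some R > 0), and E[X_{t+1} − X_t | F_t] ≤ −δ on the event {X_t ≥ 0} for all t, where δ > 0. Let τ_{x₁}⁺ = inf{t ≥ 0 : X_t ≥ x₁}. Then for every x₁ > R and every integer t₃ ≥ 1, P(τ_{x₁}⁺ ≤ t₃) ≤ t₃² exp(−(x₁ − R) δ²/(8 R³)). -/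
open MeasureTheory

private lemma exp_quad {x : ℝ} (hx : |x| ≤ 1) : Real.exp x ≤ 1 + x + x ^ 2 := by
  have h := Real.exp_bound hx (n := 2) (by norm_num)
  have hs : ∑ m ∈ Finset.range 2, x ^ m / m.factorial = 1 + x := by
    simp [Finset.sum_range_succ]
  rw [hs] at h
  norm_num at h
  have h2 := (abs_le.mp h).2
  nlinarith [sq_abs x, sq_nonneg x]

set_option maxHeartbeats 1000000 in
private lemma pair_bound
    {Ω : Type*} {m : MeasurableSpace Ω} {μ : Measure Ω} [IsProbabilityMeasure μ]
    (F : Filtration ℕ m) (X : ℕ → Ω → ℝ) (hadapt : Adapted F X)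
    (x₀ R δ : ℝ) (hR : 0 < R) (hδ : 0 < δ)
    (h0 : ∀ᵐ ω ∂μ, X 0 ω = x₀)
    (hbd : ∀ t : ℕ, ∀ᵐ ω ∂μ, |X (t + 1) ω - X t ω| ≤ R)
    (hdrift : ∀ t : ℕ, ∀ᵐ ω ∂μ, 0 ≤ X t ω → (μ[X (t + 1) - X t|F t]) ω ≤ -δ)
    (hδR : δ ≤ R) (x₁ : ℝ)
    (s t : ℕ) (hst : s < t) :
    (μ {ω | (X s ω ≤ 0 ∧ ∀ q, s < q → q ≤ t → 0 ≤ X q ω) ∧ x₁ ≤ X t ω}).toReal ≤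
      Real.exp (δ / (2 * R ^ 2) * (R - x₁)) := by
  classical
  set L : ℝ := δ / (2 * R ^ 2) with hLdef
  have hL : 0 < L := by positivity
  have hLR : L * R ≤ 1 / 2 := by
    rw [hLdef, div_mul_eq_mul_div, div_le_div_iff₀ (by positivity) (by norm_num)]
    nlinarith
  have hLR2 : L * R ^ 2 = δ / 2 := by
    rw [hLdef]; field_simp
  have measX : ∀ r, Measurable (X r) := fun r => (hadapt r).mono (F.le r) le_rfl
  have measXF : ∀ r : ℕ, Measurable[F r] (X r) := fun r => hadapt r
  -- a.e. absolute bound on X r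
  have habs : ∀ᵐ ω ∂μ, ∀ r : ℕ, |X r ω| ≤ |x₀| + r * R := by
    filter_upwards [h0, MeasureTheory.ae_all_iff.mpr hbd] with ω h₀ hb
    intro r
    induction r with
    | zero => simp [h₀]
    | succ n ih =>
      have h1 := hb n
      have h2 := abs_sub_abs_le_abs_sub (X (n + 1) ω) (X n ω)
      push_cast
      nlinarith [abs_nonneg (X (n+1) ω)]
  -- the events
  set A : ℕ → Set Ω := fun r => {ω | X s ω ≤ 0 ∧ ∀ q, s < q → q ≤ r → 0 ≤ X q ω}
    with hAdef
  have hAF : ∀ r : ℕ, s ≤ r → MeasurableSet[F r] (A r) := by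
    intro r hsr
    have hrw : A r = {ω | X s ω ≤ 0} ∩ ⋂ q ∈ Set.Ioc s r, {ω | 0 ≤ X q ω} := by
      ext ω
      simp only [hAdef, Set.mem_setOf_eq, Set.mem_inter_iff, Set.mem_iInter, Set.mem_Ioc,
        and_imp]
    rw [hrw]
    refine MeasurableSet.inter ?_ ?_
    · exact measurableSet_le ((measXF s).mono (F.mono hsr) le_rfl) measurable_const
    · exact MeasurableSet.biInter (Set.to_countable _) fun q hq =>
        measurableSet_le measurable_const ((measXF q).mono (F.mono hq.2) le_rfl)
  have hAm : ∀ r : ℕ, s ≤ r → MeasurableSet (A r) := fun r hr => F.le r _ (hAF r hr)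
  set gr : ℕ → Ω → ℝ := fun r => (A r).indicator fun ω => Real.exp (L * X r ω) with hgrdef
  have measGr : ∀ r : ℕ, s ≤ r → Measurable (gr r) := by
    intro r hr
    exact (Real.measurable_exp.comp ((measX r).const_mul L)).indicator (hAm r hr)
  have intGr : ∀ r : ℕ, s ≤ r → Integrable (gr r) μ := by
    intro r hr
    refine Integrable.mono' (integrable_const (Real.exp (L * (|x₀| + r * R))))
      (measGr r hr).aestronglyMeasurable ?_
    filter_upwards [habs] with ω hω
    rw [Real.norm_eq_abs]
    by_cases hmem : ω ∈ A r
    · rw [hgrdef]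
      simp only [Set.indicator_of_mem hmem]
      rw [abs_of_pos (Real.exp_pos _)]
      apply Real.exp_le_exp.mpr
      have hXle : X r ω ≤ |x₀| + r * R := le_trans (le_abs_self _) (hω r)
      exact mul_le_mul_of_nonneg_left hXle hL.le
    · rw [hgrdef]
      simp only [Set.indicator_of_notMem hmem, abs_zero]
      positivity
  -- base case
  have hbase : ∫ ω, gr (s + 1) ω ∂μ ≤ Real.exp (L * R) := by
    have hp : ∀ᵐ ω ∂μ, gr (s + 1) ω ≤ Real.exp (L * R) := by
      filter_upwards [hbd s] with ω hb
      by_cases hmem : ω ∈ A (s + 1)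
      · rw [hgrdef]
        simp only [Set.indicator_of_mem hmem]
        apply Real.exp_le_exp.mpr
        have h1 : X s ω ≤ 0 := hmem.1
        have h2 := (abs_le.mp hb).2
        exact mul_le_mul_of_nonneg_left (by linarith) hL.le
      · rw [hgrdef]; simp only [Set.indicator_of_notMem hmem]; positivity
    calc ∫ ω, gr (s + 1) ω ∂μ ≤ ∫ _, Real.exp (L * R) ∂μ :=
          integral_mono_ae (intGr (s + 1) (Nat.le_succ s)) (integrable_const _) hp
      _ = Real.exp (L * R) := by simp
  -- inductive step
  have hstep : ∀ r : ℕ, s < r → ∫ ω, gr (r + 1) ω ∂μ ≤ ∫ ω, gr r ω ∂μ := by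
    intro r hr
    set D : Ω → ℝ := X (r + 1) - X r with hD
    have hDapp : ∀ ω, D ω = X (r + 1) ω - X r ω := fun ω => rfl
    set g : Ω → ℝ := fun ω => Real.exp (L * D ω) with hgdef
    have measD : Measurable D := (measX (r + 1)).sub (measX r)
    have intD : Integrable D μ := by
      refine Integrable.mono' (integrable_const R) measD.aestronglyMeasurable ?_
      filter_upwards [hbd r] with ω hb
      rwa [Real.norm_eq_abs, hDapp]
    have intg : Integrable g μ := by
      refine Integrable.mono' (integrable_const (Real.exp (L * R)))
        ((Real.measurable_exp.comp (measD.const_mul L)).aestronglyMeasurable) ?_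
      filter_upwards [hbd r] with ω hb
      rw [Real.norm_eq_abs, abs_of_pos (Real.exp_pos _)]
      apply Real.exp_le_exp.mpr
      have h2 := (abs_le.mp hb).2
      have hle' : D ω ≤ R := by rw [hDapp]; exact h2
      exact mul_le_mul_of_nonneg_left hle' hL.le
    have intfg : Integrable (gr r * g) μ := by
      refine Integrable.mono'
        (integrable_const (Real.exp (L * (|x₀| + r * R)) * Real.exp (L * R)))
        ((measGr r hr.le).mul
          (Real.measurable_exp.comp (measD.const_mul L))).aestronglyMeasurable ?_
      filter_upwards [habs, hbd r] with ω hω hb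
      rw [Pi.mul_apply, Real.norm_eq_abs, abs_mul]
      have h1 : |gr r ω| ≤ Real.exp (L * (|x₀| + r * R)) := by
        by_cases hmem : ω ∈ A r
        · rw [hgrdef]
          simp only [Set.indicator_of_mem hmem]
          rw [abs_of_pos (Real.exp_pos _)]
          apply Real.exp_le_exp.mpr
          exact mul_le_mul_of_nonneg_left (le_trans (le_abs_self _) (hω r)) hL.le
        · rw [hgrdef]; simp only [Set.indicator_of_notMem hmem, abs_zero]; positivity
      have h2 : |g ω| ≤ Real.exp (L * R) := by
        rw [abs_of_pos (Real.exp_pos _)]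
        apply Real.exp_le_exp.mpr
        exact mul_le_mul_of_nonneg_left (by rw [hDapp]; exact (abs_le.mp hb).2) hL.le
      exact mul_le_mul h1 h2 (abs_nonneg _) (Real.exp_pos _).le
    have hfg_eq : gr r * g = fun ω => (A r).indicator (fun ω' => Real.exp (L * X (r + 1) ω')) ω := by
      funext ω
      by_cases hmem : ω ∈ A r
      · rw [Pi.mul_apply, hgrdef]
        simp only [Set.indicator_of_mem hmem]
        rw [← Real.exp_add]
        congr 1
        rw [hDapp]; ring
      · rw [Pi.mul_apply, hgrdef]
        simp only [Set.indicator_of_notMem hmem, zero_mul]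
    have hsub : ∀ ω, gr (r + 1) ω ≤ (gr r * g) ω := by
      intro ω
      rw [hfg_eq]
      have hAsub : A (r + 1) ⊆ A r := by
        intro ω hω
        exact ⟨hω.1, fun q hq1 hq2 => hω.2 q hq1 (hq2.trans (Nat.le_succ r))⟩
      exact Set.indicator_le_indicator_of_subset hAsub (fun ω' => (Real.exp_pos _).le) ω
    -- conditional expectation bound
    have hfSM : StronglyMeasurable[F r] (gr r) :=
      ((Real.measurable_exp.comp ((measXF r).const_mul L)).indicator (hAF r hr.le)).stronglyMeasurable
    have hpull : μ[gr r * g|F r] =ᵐ[μ] gr r * μ[g|F r] :=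
      condExp_mul_of_stronglyMeasurable_left hfSM intfg intg
    set c : ℝ := 1 + L ^ 2 * R ^ 2 with hcdef
    have hgle : g ≤ᵐ[μ] (fun _ => c) + fun ω => L * D ω := by
      filter_upwards [hbd r] with ω hb
      have hDb : |D ω| ≤ R := by rw [hDapp]; exact hb
      have habs1 : |L * D ω| ≤ 1 := by
        rw [abs_mul, abs_of_pos hL]
        nlinarith [abs_nonneg (D ω), hL.le]
      have h3 := exp_quad habs1
      have h4 : (L * D ω) ^ 2 ≤ L ^ 2 * R ^ 2 := by
        have h5 : D ω ^ 2 ≤ R ^ 2 :=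
          sq_le_sq' (by linarith [(abs_le.mp hDb).1]) (abs_le.mp hDb).2
        calc (L * D ω) ^ 2 = L ^ 2 * D ω ^ 2 := by ring
          _ ≤ L ^ 2 * R ^ 2 := mul_le_mul_of_nonneg_left h5 (sq_nonneg L)
      simp only [Pi.add_apply]
      rw [hgdef, hcdef]
      nlinarith
    have intLD : Integrable (fun ω => L * D ω) μ := intD.const_mul L
    have intrhs : Integrable ((fun _ : Ω => c) + fun ω => L * D ω) μ :=
      (integrable_const c).add intLD
    have hcond1 : μ[g|F r] ≤ᵐ[μ] μ[(fun _ : Ω => c) + fun ω => L * D ω|F r] :=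
      condExp_mono intg intrhs hgle
    have hcond2 := condExp_add (μ := μ) (m := F r) (integrable_const c) intLD
    have hLDsmul : (fun ω => L * D ω) = L • D := by funext ω; simp [smul_eq_mul]
    have hcond3 := condExp_smul (μ := μ) (m := F r) L D
    have hEbd : ∀ᵐ ω ∂μ, (μ[g|F r]) ω ≤ c + L * (μ[D|F r]) ω := by
      rw [hLDsmul] at hcond1 hcond2
      filter_upwards [hcond1, hcond2, hcond3] with ω h1 h2 h3
      rw [h2, Pi.add_apply, condExp_const (F.le r), h3, Pi.smul_apply, smul_eq_mul] at h1
      exact h1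
    have hEone : ∀ᵐ ω ∂μ, 0 ≤ X r ω → (μ[g|F r]) ω ≤ 1 := by
      have hd := hdrift r
      rw [← hD] at hd
      filter_upwards [hEbd, hd] with ω h1 h2 hx
      have h3 := h2 hx
      have h4 : L * (μ[D|F r]) ω ≤ L * (-δ) := by
        exact mul_le_mul_of_nonneg_left h3 hL.le
      have h5 : L ^ 2 * R ^ 2 ≤ L * δ := by nlinarith [hL.le]
      rw [hcdef] at h1
      nlinarith
    have hle : μ[gr r * g|F r] ≤ᵐ[μ] gr r := by
      filter_upwards [hpull, hEone] with ω h1 h2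
      rw [h1, Pi.mul_apply]
      by_cases hmem : ω ∈ A r
      · have hx : 0 ≤ X r ω := hmem.2 r hr le_rfl
        have hfv : gr r ω = Real.exp (L * X r ω) := by
          rw [hgrdef]; simp only [Set.indicator_of_mem hmem]
        rw [hfv]
        calc Real.exp (L * X r ω) * (μ[g|F r]) ω ≤ Real.exp (L * X r ω) * 1 :=
              mul_le_mul_of_nonneg_left (h2 hx) (Real.exp_pos _).le
          _ = Real.exp (L * X r ω) := mul_one _
      · have hfv : gr r ω = 0 := by rw [hgrdef]; simp only [Set.indicator_of_notMem hmem]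
        rw [hfv, zero_mul]
    calc ∫ ω, gr (r + 1) ω ∂μ ≤ ∫ ω, (gr r * g) ω ∂μ :=
          integral_mono (intGr (r + 1) (by omega)) intfg hsub
      _ = ∫ ω, (μ[gr r * g|F r]) ω ∂μ := (integral_condExp (F.le r)).symm
      _ ≤ ∫ ω, gr r ω ∂μ := integral_mono_ae integrable_condExp (intGr r hr.le) hle
  -- induction
  have hind : ∀ r : ℕ, s < r → ∫ ω, gr r ω ∂μ ≤ Real.exp (L * R) := by
    intro r hr
    induction r, (Nat.succ_le_of_lt hr : s + 1 ≤ r) using Nat.le_induction with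
    | base => exact hbase
    | succ n hn ih =>
      exact le_trans (hstep n (Nat.lt_of_lt_of_le (Nat.lt_succ_self s) hn)) (ih (Nat.lt_of_lt_of_le (Nat.lt_succ_self s) hn))
  -- Markov
  set S : Set Ω := {ω | (X s ω ≤ 0 ∧ ∀ q, s < q → q ≤ t → 0 ≤ X q ω) ∧ x₁ ≤ X t ω} with hSdef
  have hSsubA : S ⊆ A t := fun ω hω => hω.1
  have hSm : MeasurableSet S := by
    have : S = A t ∩ {ω | x₁ ≤ X t ω} := rfl
    rw [this]
    exact (hAm t hst.le).inter (measurableSet_le measurable_const (measX t))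
  have hMark : ∀ ω, S.indicator (fun _ => Real.exp (L * x₁)) ω ≤ gr t ω := by
    intro ω
    by_cases hmem : ω ∈ S
    · rw [Set.indicator_of_mem hmem]
      have hA : ω ∈ A t := hSsubA hmem
      rw [hgrdef]
      simp only [Set.indicator_of_mem hA]
      exact Real.exp_le_exp.mpr (mul_le_mul_of_nonneg_left hmem.2 hL.le)
    · rw [Set.indicator_of_notMem hmem]
      exact Set.indicator_nonneg (fun ω' _ => (Real.exp_pos _).le) ω
  have hMint : ∫ ω, S.indicator (fun _ => Real.exp (L * x₁)) ω ∂μ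
      = (μ S).toReal * Real.exp (L * x₁) := by
    rw [integral_indicator_const _ hSm]
    simp [smul_eq_mul, measureReal_def]
  have hfinal : (μ S).toReal * Real.exp (L * x₁) ≤ Real.exp (L * R) := by
    rw [← hMint]
    exact le_trans
      (integral_mono ((integrable_const _).indicator hSm) (intGr t hst.le) hMark)
      (hind t hst)
  have h6 : (μ S).toReal ≤ Real.exp (L * R) / Real.exp (L * x₁) :=
    (le_div_iff₀ (Real.exp_pos _)).mpr hfinal
  calc (μ S).toReal ≤ Real.exp (L * R) / Real.exp (L * x₁) := h6
    _ = Real.exp (L * (R - x₁)) := by rw [← Real.exp_sub]; ring_nf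


/-- **Hitting-time estimate** (Lemma 2.1, part 3). If `(X_t)` is adapted,
starts at `x₀ ≤ 0`, has increments bounded by `R`, and has conditional drift at
most `−δ < 0` on the event `{X_t ≥ 0}`, then for every `x₁ > R` and every
integer `t₃ ≥ 1`, `P(τ_{x₁}⁺ ≤ t₃) ≤ t₃² exp(−(x₁ − R) δ²/(8 R³))`. -/
theorem supermartingale_no_upcrossing_drift
    {Ω : Type*} {m : MeasurableSpace Ω} {μ : Measure Ω} [IsProbabilityMeasure μ]
    (F : Filtration ℕ m) (X : ℕ → Ω → ℝ) (hadapt : Adapted F X)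
    (x₀ R δ : ℝ) (hR : 0 < R) (hδ : 0 < δ) (hx₀ : x₀ ≤ 0)
    (h0 : ∀ᵐ ω ∂μ, X 0 ω = x₀)
    (hbd : ∀ t : ℕ, ∀ᵐ ω ∂μ, |X (t + 1) ω - X t ω| ≤ R)
    (hdrift : ∀ t : ℕ, ∀ᵐ ω ∂μ, 0 ≤ X t ω → (μ[X (t + 1) - X t|F t]) ω ≤ -δ)
    (x₁ : ℝ) (hx₁ : R < x₁) (t₃ : ℕ) (ht₃ : 1 ≤ t₃) :
    (μ {ω | ∃ s ≤ t₃, x₁ ≤ X s ω}).toReal ≤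
      (t₃ : ℝ) ^ 2 * Real.exp (-((x₁ - R) * δ ^ 2) / (8 * R ^ 3)) := by
  classical
  have hx₁pos : 0 < x₁ := lt_trans hR hx₁
  by_cases hcase : ∀ r : ℕ, μ {ω | 0 ≤ X r ω} = 0
  · -- degenerate case: X never reaches 0
    have hT : μ {ω | ∃ s ≤ t₃, x₁ ≤ X s ω} = 0 := by
      have hsub : {ω | ∃ s ≤ t₃, x₁ ≤ X s ω} ⊆ ⋃ u ∈ Set.Iic t₃, {ω | 0 ≤ X u ω} := by
        rintro ω ⟨u, hu, hx⟩
        exact Set.mem_biUnion hu (le_trans hx₁pos.le hx)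
      refine measure_mono_null hsub ?_
      exact (measure_biUnion_null_iff (Set.to_countable _)).mpr fun u _ => hcase u
    rw [hT]
    rw [ENNReal.toReal_zero]
    positivity
  · push_neg at hcase
    obtain ⟨r₀, hr₀⟩ := hcase
    have measX : ∀ r, Measurable (X r) := fun r => (hadapt r).mono (F.le r) le_rfl
    -- δ ≤ R
    have intD0 : Integrable (X (r₀ + 1) - X r₀) μ := by
      refine Integrable.mono' (integrable_const R)
        ((measX (r₀ + 1)).sub (measX r₀)).aestronglyMeasurable ?_
      filter_upwards [hbd r₀] with ω hb
      rwa [Real.norm_eq_abs]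
    have hgeR : ∀ᵐ ω ∂μ, -R ≤ (μ[X (r₀ + 1) - X r₀|F r₀]) ω := by
      have h1 : (fun _ : Ω => -R) ≤ᵐ[μ] X (r₀ + 1) - X r₀ := by
        filter_upwards [hbd r₀] with ω hb
        have := (abs_le.mp hb).1
        simpa using this
      have h2 := condExp_mono (m := F r₀) (integrable_const (-R)) intD0 h1
      filter_upwards [h2] with ω hω
      rwa [condExp_const (F.le r₀)] at hω
    have hδR : δ ≤ R := by
      by_contra hcon
      push_neg at hcon
      apply hr₀
      rw [measure_eq_zero_iff_ae_notMem]
      filter_upwards [hgeR, hdrift r₀] with ω h1 h2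
      intro hx
      have hx' : 0 ≤ X r₀ ω := hx
      have := h2 hx'
      linarith
    -- decomposition over pairs
    set L : ℝ := δ / (2 * R ^ 2) with hLdef
    set c : ℝ := Real.exp (L * (R - x₁)) with hcdef
    have hc0 : 0 ≤ c := (Real.exp_pos _).le
    set Sst : ℕ → ℕ → Set Ω := fun s t =>
      {ω | (X s ω ≤ 0 ∧ ∀ q, s < q → q ≤ t → 0 ≤ X q ω) ∧ x₁ ≤ X t ω} with hSstdef
    have hpair : ∀ s t : ℕ, s < t → (μ (Sst s t)).toReal ≤ c :=
      fun s t h => pair_bound F X hadapt x₀ R δ hR hδ h0 hbd hdrift hδR x₁ s t h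
    set T : Set Ω := {ω | ∃ s ≤ t₃, x₁ ≤ X s ω} with hTdef
    set U : Set Ω := ⋃ t ∈ Finset.Icc 1 t₃, ⋃ s ∈ Finset.range t, Sst s t with hUdef
    have hcover : T ≤ᵐ[μ] U := by
      filter_upwards [h0] with ω h₀
      intro hT
      obtain ⟨u, hu, hx⟩ := hT
      have hu0 : u ≠ 0 := by
        rintro rfl
        rw [h₀] at hx
        linarith
      set s₀ := Nat.findGreatest (fun q => X q ω ≤ 0) (u - 1) with hs₀
      have hP0 : X 0 ω ≤ 0 := by rw [h₀]; exact hx₀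
      have hs_spec : X s₀ ω ≤ 0 := by
        have := Nat.findGreatest_spec (P := fun q => X q ω ≤ 0) (Nat.zero_le (u - 1)) hP0
        simpa [hs₀] using this
      have hs_le : s₀ ≤ u - 1 := Nat.findGreatest_le _
      have hslt : s₀ < u := lt_of_le_of_lt hs_le (Nat.pred_lt hu0)
      refine Set.mem_biUnion (Finset.mem_Icc.mpr ⟨Nat.one_le_iff_ne_zero.mpr hu0, hu⟩) ?_
      refine Set.mem_biUnion (Finset.mem_range.mpr hslt) ?_
      refine ⟨⟨hs_spec, ?_⟩, hx⟩
      intro q hq1 hq2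
      rcases eq_or_lt_of_le hq2 with rfl | hqu
      · exact le_trans hx₁pos.le hx
      · have hq1' : Nat.findGreatest (fun q => X q ω ≤ 0) (u - 1) < q := by
          rw [← hs₀]; exact hq1
        have hng := Nat.findGreatest_is_greatest (P := fun q => X q ω ≤ 0)
          hq1' (Nat.le_pred_of_lt hqu)
        exact (not_le.mp hng).le
    have hμ : μ T ≤ ∑ t ∈ Finset.Icc 1 t₃, ∑ s ∈ Finset.range t, μ (Sst s t) := by
      calc μ T ≤ μ U := measure_mono_ae hcover
        _ ≤ ∑ t ∈ Finset.Icc 1 t₃, μ (⋃ s ∈ Finset.range t, Sst s t) :=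
            measure_biUnion_finset_le _ _
        _ ≤ ∑ t ∈ Finset.Icc 1 t₃, ∑ s ∈ Finset.range t, μ (Sst s t) :=
            Finset.sum_le_sum fun t _ => measure_biUnion_finset_le _ _
    have hsumfin : ∑ t ∈ Finset.Icc 1 t₃, ∑ s ∈ Finset.range t, μ (Sst s t) ≠ ⊤ := by
      refine (ENNReal.sum_lt_top.mpr fun t _ => ?_).ne
      exact ENNReal.sum_lt_top.mpr fun s _ => (measure_lt_top μ _)
    have h1 : (μ T).toReal ≤
        ∑ t ∈ Finset.Icc 1 t₃, ∑ s ∈ Finset.range t, (μ (Sst s t)).toReal := by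
      refine le_trans (ENNReal.toReal_mono hsumfin hμ) (le_of_eq ?_)
      rw [ENNReal.toReal_sum (fun t _ => (ENNReal.sum_lt_top.mpr
        fun s _ => measure_lt_top μ _).ne)]
      exact Finset.sum_congr rfl fun t _ =>
        ENNReal.toReal_sum fun s _ => (measure_lt_top μ _).ne
    have h2 : ∑ t ∈ Finset.Icc 1 t₃, ∑ s ∈ Finset.range t, (μ (Sst s t)).toReal ≤
        (t₃ : ℝ) ^ 2 * c := by
      calc ∑ t ∈ Finset.Icc 1 t₃, ∑ s ∈ Finset.range t, (μ (Sst s t)).toReal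
          ≤ ∑ t ∈ Finset.Icc 1 t₃, (t₃ : ℝ) * c := by
            refine Finset.sum_le_sum fun t ht => ?_
            have htle : t ≤ t₃ := (Finset.mem_Icc.mp ht).2
            calc ∑ s ∈ Finset.range t, (μ (Sst s t)).toReal
                ≤ ∑ s ∈ Finset.range t, c :=
                  Finset.sum_le_sum fun s hs => hpair s t (Finset.mem_range.mp hs)
              _ = (t : ℝ) * c := by rw [Finset.sum_const, Finset.card_range]; simp
              _ ≤ (t₃ : ℝ) * c := by
                  apply mul_le_mul_of_nonneg_right _ hc0
                  exact_mod_cast htle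
        _ = (t₃ : ℝ) * ((t₃ : ℝ) * c) := by
            rw [Finset.sum_const, Nat.card_Icc, Nat.add_sub_cancel, nsmul_eq_mul]
        _ = (t₃ : ℝ) ^ 2 * c := by ring
    have h3 : c ≤ Real.exp (-((x₁ - R) * δ ^ 2) / (8 * R ^ 3)) := by
      rw [hcdef]
      apply Real.exp_le_exp.mpr
      rw [hLdef, div_mul_eq_mul_div, div_le_div_iff₀ (by positivity) (by positivity)]
      nlinarith [mul_nonneg (mul_nonneg (mul_nonneg (sub_nonneg.mpr hx₁.le) hδ.le)
        (by linarith : (0:ℝ) ≤ 4 * R - δ)) (sq_nonneg R)]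
    calc (μ T).toReal ≤ (t₃ : ℝ) ^ 2 * c := le_trans h1 h2
      _ ≤ (t₃ : ℝ) ^ 2 * Real.exp (-((x₁ - R) * δ ^ 2) / (8 * R ^ 3)) :=
          mul_le_mul_of_nonneg_left h3 (by positivity)
end

section
/- Let (Z_t)_{t≥0} be a time-homogeneous Markov chain taking values in a bounded measurable subset of ℝ^d, with transition kernel P, and write E_{z₀}, Var_{z₀} for expectation and variance when Z_0 = z₀. Suppose there is 0 < η < 1 such that for all pairs of starting states (z₀, z̃₀) and all t ≥ 0, ‖E_{z₀} Z_t − E_{z̃₀} Z_t‖₂ ≤ η^t ‖z₀ − z̃₀‖₂. Then v_t := sup_{z₀} E_{z₀} ‖Z_t − E_{z₀} Z_t‖₂² satisfies v_t ≤ v₁ · min{t, (1−η²)^{−1}} for all t ≥ 1. -/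
open MeasureTheory ProbabilityTheory

/-- The `t`-step transition kernel of a time-homogeneous Markov chain with
one-step kernel `κ`. -/
noncomputable def kernelIter {E : Type*} [MeasurableSpace E] (κ : Kernel E E) :
    ℕ → Kernel E E
  | 0 => Kernel.id
  | (t + 1) => κ ∘ₖ kernelIter κ t

/-- `E_{z₀} Z_t`: the mean position of the chain at time `t` started from `z₀`. -/
noncomputable def chainMean {d : ℕ} (κ : Kernel (EuclideanSpace ℝ (Fin d)) (EuclideanSpace ℝ (Fin d)))
    (t : ℕ) (z₀ : EuclideanSpace ℝ (Fin d)) : EuclideanSpace ℝ (Fin d) :=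
  ∫ z, z ∂(kernelIter κ t z₀)

/-- `Var_{z₀}(Z_t) = E_{z₀} ‖Z_t − E_{z₀} Z_t‖₂²`. -/
noncomputable def chainVar {d : ℕ} (κ : Kernel (EuclideanSpace ℝ (Fin d)) (EuclideanSpace ℝ (Fin d)))
    (t : ℕ) (z₀ : EuclideanSpace ℝ (Fin d)) : ℝ :=
  ∫ z, ‖z - chainMean κ t z₀‖ ^ 2 ∂(kernelIter κ t z₀)

/-- `v_t = sup_{z₀ ∈ S} Var_{z₀}(Z_t)`. -/
noncomputable def chainVarSup {d : ℕ} (κ : Kernel (EuclideanSpace ℝ (Fin d)) (EuclideanSpace ℝ (Fin d)))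
    (S : Set (EuclideanSpace ℝ (Fin d))) (t : ℕ) : ℝ :=
  ⨆ z₀ : S, chainVar κ t z₀

set_option linter.unusedSectionVars false

instance kernelIter.instIsMarkovKernel {E : Type*} [MeasurableSpace E] (κ : Kernel E E)
    [IsMarkovKernel κ] (t : ℕ) : IsMarkovKernel (kernelIter κ t) := by
  induction t with
  | zero => rw [kernelIter]; infer_instance
  | succ t ih => rw [kernelIter]; infer_instance

lemma kernelIter_succ' {E : Type*} [MeasurableSpace E] (κ : Kernel E E) [IsMarkovKernel κ]
    (t : ℕ) : kernelIter κ (t + 1) = kernelIter κ t ∘ₖ κ := by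
  induction t with
  | zero => show κ ∘ₖ Kernel.id = Kernel.id ∘ₖ κ; simp
  | succ t ih =>
      show κ ∘ₖ kernelIter κ (t + 1) = (κ ∘ₖ kernelIter κ t) ∘ₖ κ
      rw [ih, Kernel.comp_assoc]

lemma integral_bind' {α β : Type*} [MeasurableSpace α] [MeasurableSpace β]
    (μ : Measure α) [SFinite μ] (η : Kernel α β) [IsSFiniteKernel η]
    {F : Type*} [NormedAddCommGroup F] [NormedSpace ℝ F] {f : β → F}
    (hf : Integrable f (μ.bind η)) :
    ∫ x, f x ∂(μ.bind η) = ∫ a, ∫ x, f x ∂(η a) ∂μ := by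
  have hmap : μ.bind ⇑η = (μ ⊗ₘ η).map Prod.snd := by
    ext s hs
    rw [Measure.map_apply measurable_snd hs, Measure.bind_apply hs η.measurable.aemeasurable,
      Measure.compProd_apply (measurable_snd hs)]
    rfl
  rw [hmap] at hf ⊢
  rw [integral_map measurable_snd.aemeasurable hf.aestronglyMeasurable]
  have hint : Integrable (fun p : α × β => f p.2) (μ ⊗ₘ η) :=
    (integrable_map_measure hf.aestronglyMeasurable measurable_snd.aemeasurable).mp hf
  rw [Measure.integral_compProd hint]

section Aux

variable {d : ℕ}


lemma ae_mem_of_compl_zero {ν : Measure (EuclideanSpace ℝ (Fin d))} {S : Set (EuclideanSpace ℝ (Fin d))} (h : ν Sᶜ = 0) :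
    ∀ᵐ z ∂ν, z ∈ S := by
  rw [ae_iff]
  simpa [Set.compl_def] using h

variable {κ : Kernel (EuclideanSpace ℝ (Fin d)) (EuclideanSpace ℝ (Fin d))} [IsMarkovKernel κ] {S : Set (EuclideanSpace ℝ (Fin d))}

lemma kernelIter_compl_zero (hSmeas : MeasurableSet S)
    (hstay : ∀ z ∈ S, κ z Sᶜ = 0) (t : ℕ) :
    ∀ z ∈ S, kernelIter κ t z Sᶜ = 0 := by
  induction t with
  | zero =>
      intro z hz
      rw [kernelIter, Kernel.id_apply]
      simp [Measure.dirac_apply' _ hSmeas.compl, hz]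
  | succ t ih =>
      intro z hz
      have hb : kernelIter κ (t + 1) z = (kernelIter κ t z).bind κ := by
        rw [kernelIter, Kernel.comp_apply]
      rw [hb, Measure.bind_apply hSmeas.compl κ.measurable.aemeasurable,
        lintegral_eq_zero_iff (κ.measurable_coe hSmeas.compl)]
      filter_upwards [ae_mem_of_compl_zero (ih z hz)] with a ha
      exact hstay a ha

lemma integrable_of_boundS {ν : Measure (EuclideanSpace ℝ (Fin d))} [IsFiniteMeasure ν] (hν : ν Sᶜ = 0)
    {F : Type*} [NormedAddCommGroup F] {f : (EuclideanSpace ℝ (Fin d)) → F} (hf : AEStronglyMeasurable f ν)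
    {C : ℝ} (hC : ∀ z ∈ S, ‖f z‖ ≤ C) : Integrable f ν :=
  (integrable_const C).mono' hf ((ae_mem_of_compl_zero hν).mono fun z hz => hC z hz)

lemma integral_le_of_boundS {ν : Measure (EuclideanSpace ℝ (Fin d))} [IsProbabilityMeasure ν] (hν : ν Sᶜ = 0)
    {f : (EuclideanSpace ℝ (Fin d)) → ℝ} (hf : Integrable f ν) {C : ℝ} (hC : ∀ z ∈ S, f z ≤ C) :
    ∫ z, f z ∂ν ≤ C := by
  calc ∫ z, f z ∂ν ≤ ∫ _, C ∂ν :=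
        integral_mono_ae hf (integrable_const C)
          ((ae_mem_of_compl_zero hν).mono fun z hz => hC z hz)
  _ = C := by simp

lemma norm_integral_le_of_boundS {ν : Measure (EuclideanSpace ℝ (Fin d))} [IsProbabilityMeasure ν] (hν : ν Sᶜ = 0)
    {g : (EuclideanSpace ℝ (Fin d)) → (EuclideanSpace ℝ (Fin d))} {R : ℝ} (hR : ∀ z ∈ S, ‖g z‖ ≤ R) : ‖∫ z, g z ∂ν‖ ≤ R := by
  have h := norm_integral_le_of_norm_le_const (μ := ν) (f := g) (C := R)
    ((ae_mem_of_compl_zero hν).mono fun z hz => hR z hz)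
  simpa using h

lemma integrable_normsq_of_boundS {ν : Measure (EuclideanSpace ℝ (Fin d))} [IsFiniteMeasure ν] (hν : ν Sᶜ = 0)
    {g : (EuclideanSpace ℝ (Fin d)) → (EuclideanSpace ℝ (Fin d))} (hgm : AEStronglyMeasurable g ν) {B : ℝ} (hB : ∀ z ∈ S, ‖g z‖ ≤ B)
    (c : (EuclideanSpace ℝ (Fin d))) : Integrable (fun z => ‖g z - c‖ ^ 2) ν := by
  refine integrable_of_boundS hν
    (((hgm.sub aestronglyMeasurable_const).norm.aemeasurable.pow_const 2).aestronglyMeasurable)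
    (C := (B + ‖c‖) ^ 2) fun z hz => ?_
  have h1 : ‖g z - c‖ ≤ B + ‖c‖ := (norm_sub_le _ _).trans (add_le_add_left (hB z hz) _)
  have h2 : (0:ℝ) ≤ ‖g z - c‖ ^ 2 := by positivity
  rw [Real.norm_eq_abs, abs_of_nonneg h2]
  exact pow_le_pow_left₀ (norm_nonneg _) h1 2

lemma chainMean_stronglyMeasurable (t : ℕ) : StronglyMeasurable (chainMean κ t) := by
  have h : StronglyMeasurable (fun p : (EuclideanSpace ℝ (Fin d)) × (EuclideanSpace ℝ (Fin d)) => p.2) := measurable_snd.stronglyMeasurable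
  exact h.integral_kernel_prod_right' (κ := kernelIter κ t)

lemma chainVar_stronglyMeasurable (t : ℕ) : StronglyMeasurable (chainVar κ t) := by
  have h : StronglyMeasurable (fun p : (EuclideanSpace ℝ (Fin d)) × (EuclideanSpace ℝ (Fin d)) => ‖p.2 - chainMean κ t p.1‖ ^ 2) := by
    have hm := (chainMean_stronglyMeasurable (κ := κ) t).measurable
    exact ((measurable_snd.sub (hm.comp measurable_fst)).norm.pow_const 2).stronglyMeasurable
  exact h.integral_kernel_prod_right' (κ := kernelIter κ t)

lemma chainVar_nonneg (t : ℕ) (z : (EuclideanSpace ℝ (Fin d))) : 0 ≤ chainVar κ t z :=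
  integral_nonneg fun w => by positivity

lemma var_decomp {ν : Measure (EuclideanSpace ℝ (Fin d))} [IsProbabilityMeasure ν] (hν : ν Sᶜ = 0)
    {g : (EuclideanSpace ℝ (Fin d)) → (EuclideanSpace ℝ (Fin d))} (hgm : AEStronglyMeasurable g ν) {B : ℝ} (hB : ∀ z ∈ S, ‖g z‖ ≤ B) (c : (EuclideanSpace ℝ (Fin d))) :
    ∫ z, ‖g z - c‖ ^ 2 ∂ν
      = ∫ z, ‖g z - ∫ w, g w ∂ν‖ ^ 2 ∂ν + ‖(∫ w, g w ∂ν) - c‖ ^ 2 := by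
  set m := ∫ w, g w ∂ν with hm
  have hgint : Integrable g ν := integrable_of_boundS hν hgm hB
  have expand : ∀ z, ‖g z - c‖ ^ 2
      = ‖g z - m‖ ^ 2 + (2 * (inner ℝ (m - c) (g z - m) : ℝ) + ‖m - c‖ ^ 2) := by
    intro z
    have hzc : g z - c = (g z - m) + (m - c) := by abel
    rw [hzc, norm_add_sq_real, real_inner_comm]
    ring
  have hinner : Integrable (fun z => (inner ℝ (m - c) (g z - m) : ℝ)) ν :=
    (hgint.sub (integrable_const m)).const_inner _
  have hstep : ∫ z, ‖g z - c‖ ^ 2 ∂ν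
      = ∫ z, ‖g z - m‖ ^ 2 ∂ν + (2 * ∫ z, (inner ℝ (m - c) (g z - m) : ℝ) ∂ν + ‖m - c‖ ^ 2) := by
    rw [show (fun z => ‖g z - c‖ ^ 2)
        = fun z => ‖g z - m‖ ^ 2 + (2 * (inner ℝ (m - c) (g z - m) : ℝ) + ‖m - c‖ ^ 2) from funext expand]
    have h2 : Integrable (fun z => 2 * (inner ℝ (m - c) (g z - m) : ℝ) + ‖m - c‖ ^ 2) ν :=
      (hinner.const_mul 2).add (integrable_const _)
    have h3 : Integrable (fun z => 2 * (inner ℝ (m - c) (g z - m) : ℝ)) ν := hinner.const_mul 2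
    rw [integral_add (integrable_normsq_of_boundS hν hgm hB m) h2,
      integral_add h3 (integrable_const _), integral_const_mul, integral_const]
    simp
  have hsub : Integrable (fun z => g z - m) ν := hgint.sub (integrable_const m)
  rw [hstep, integral_inner hsub, integral_sub hgint (integrable_const m), integral_const]
  simp [← hm]

lemma var_double {ν : Measure (EuclideanSpace ℝ (Fin d))} [IsProbabilityMeasure ν] (hν : ν Sᶜ = 0)
    {g : (EuclideanSpace ℝ (Fin d)) → (EuclideanSpace ℝ (Fin d))} (hgm : AEStronglyMeasurable g ν) {B : ℝ} (hB : ∀ z ∈ S, ‖g z‖ ≤ B) :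
    ∫ y, ∫ z, ‖g z - g y‖ ^ 2 ∂ν ∂ν = 2 * ∫ z, ‖g z - ∫ w, g w ∂ν‖ ^ 2 ∂ν := by
  set m := ∫ w, g w ∂ν with hm
  set T := ∫ z, ‖g z - m‖ ^ 2 ∂ν with hT
  have h1 : ∀ y, ∫ z, ‖g z - g y‖ ^ 2 ∂ν = T + ‖m - g y‖ ^ 2 := fun y =>
    var_decomp hν hgm hB (g y)
  have h2 : Integrable (fun y => ‖m - g y‖ ^ 2) ν := by
    have := integrable_normsq_of_boundS hν hgm hB m
    apply this.congr
    filter_upwards with y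
    rw [norm_sub_rev]
  calc ∫ y, ∫ z, ‖g z - g y‖ ^ 2 ∂ν ∂ν = ∫ y, (T + ‖m - g y‖ ^ 2) ∂ν := by
        rw [show (fun y => ∫ z, ‖g z - g y‖ ^ 2 ∂ν)
          = fun y => T + ‖m - g y‖ ^ 2 from funext h1]
  _ = T + ∫ y, ‖m - g y‖ ^ 2 ∂ν := by
        rw [integral_add (integrable_const T) h2, integral_const]
        simp
  _ = 2 * T := by
        have : ∫ y, ‖m - g y‖ ^ 2 ∂ν = T := by
          rw [hT]
          congr 1
          funext y
          rw [norm_sub_rev]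
        rw [this]; ring


lemma norm_chainMean_le (hSmeas : MeasurableSet S) (hstay : ∀ z ∈ S, κ z Sᶜ = 0)
    {R : ℝ} (hR : ∀ z ∈ S, ‖z‖ ≤ R) (t : ℕ) :
    ∀ z ∈ S, ‖chainMean κ t z‖ ≤ R := fun z hz =>
  norm_integral_le_of_boundS (kernelIter_compl_zero hSmeas hstay t z hz) hR

lemma chainVar_le_boundS (hSmeas : MeasurableSet S) (hstay : ∀ z ∈ S, κ z Sᶜ = 0)
    {R : ℝ} (hR : ∀ z ∈ S, ‖z‖ ≤ R) (t : ℕ) :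
    ∀ z ∈ S, chainVar κ t z ≤ (R + R) ^ 2 := by
  intro z hz
  have hν := kernelIter_compl_zero hSmeas hstay t z hz
  refine integral_le_of_boundS hν
    (integrable_normsq_of_boundS hν aestronglyMeasurable_id hR (chainMean κ t z))
    fun w hw => ?_
  have h1 : ‖w - chainMean κ t z‖ ≤ R + R :=
    (norm_sub_le _ _).trans (add_le_add (hR w hw) (norm_chainMean_le hSmeas hstay hR t z hz))
  exact pow_le_pow_left₀ (norm_nonneg _) h1 2

lemma chainVar_le_chainVarSup (hSmeas : MeasurableSet S) (hstay : ∀ z ∈ S, κ z Sᶜ = 0)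
    {R : ℝ} (hR : ∀ z ∈ S, ‖z‖ ≤ R) (t : ℕ) :
    ∀ z ∈ S, chainVar κ t z ≤ chainVarSup κ S t := by
  intro z hz
  have hbdd : BddAbove (Set.range fun z : S => chainVar κ t z) := by
    refine ⟨(R + R) ^ 2, ?_⟩
    rintro x ⟨w, rfl⟩
    exact chainVar_le_boundS hSmeas hstay hR t w w.2
  exact le_ciSup hbdd (⟨z, hz⟩ : S)

lemma chainVarSup_nonneg (t : ℕ) : 0 ≤ chainVarSup κ S t :=
  Real.iSup_nonneg fun z => chainVar_nonneg (κ := κ) t z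

lemma chainVar_succ_le (hSmeas : MeasurableSet S)
    (hstay : ∀ z ∈ S, κ z Sᶜ = 0) {R : ℝ} (hR : ∀ z ∈ S, ‖z‖ ≤ R)
    {η : ℝ} (hη : 0 ≤ η)
    (hcontr : ∀ z₀ ∈ S, ∀ z₁ ∈ S, ∀ t : ℕ,
      ‖chainMean κ t z₀ - chainMean κ t z₁‖ ≤ η ^ t * ‖z₀ - z₁‖)
    (t : ℕ) {z₀ : EuclideanSpace ℝ (Fin d)} (hz₀ : z₀ ∈ S) :
    chainVar κ (t + 1) z₀ ≤ chainVarSup κ S t + η ^ (2 * t) * chainVarSup κ S 1 := by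
  have hsupp : ∀ s : ℕ, ∀ z ∈ S, kernelIter κ s z Sᶜ = 0 :=
    fun s => kernelIter_compl_zero hSmeas hstay s
  have hν : (κ z₀) Sᶜ = 0 := hstay z₀ hz₀
  have hκ1 : kernelIter κ 1 z₀ = κ z₀ := by
    show (κ ∘ₖ Kernel.id) z₀ = κ z₀
    rw [Kernel.comp_id]
  have hbind : kernelIter κ (t + 1) z₀ = (κ z₀).bind (kernelIter κ t) := by
    rw [kernelIter_succ', Kernel.comp_apply]
  set g := chainMean κ t with hg
  have hgm : AEStronglyMeasurable g (κ z₀) :=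
    (chainMean_stronglyMeasurable t).aestronglyMeasurable
  have hgB : ∀ z ∈ S, ‖g z‖ ≤ R := norm_chainMean_le hSmeas hstay hR t
  set μ1 := chainMean κ (t + 1) z₀ with hμ1
  have hidint : Integrable (fun w : EuclideanSpace ℝ (Fin d) => w)
      ((κ z₀).bind (kernelIter κ t)) := by
    rw [← hbind]
    exact integrable_of_boundS (hsupp (t + 1) z₀ hz₀) aestronglyMeasurable_id hR
  have hmean : μ1 = ∫ z, g z ∂(κ z₀) := by
    rw [hμ1]
    show (∫ w, w ∂(kernelIter κ (t + 1) z₀)) = _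
    rw [hbind, integral_bind' _ _ hidint]
    rfl
  have hfint : Integrable (fun w => ‖w - μ1‖ ^ 2) ((κ z₀).bind (kernelIter κ t)) := by
    rw [← hbind]
    exact integrable_normsq_of_boundS (hsupp (t + 1) z₀ hz₀) aestronglyMeasurable_id hR μ1
  have hsplit : chainVar κ (t + 1) z₀
      = ∫ z, (∫ w, ‖w - μ1‖ ^ 2 ∂(kernelIter κ t z)) ∂(κ z₀) := by
    show (∫ w, ‖w - μ1‖ ^ 2 ∂(kernelIter κ (t + 1) z₀)) = _
    rw [hbind, integral_bind' _ _ hfint]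
  have hinner_eq : ∀ᵐ z ∂(κ z₀), (∫ w, ‖w - μ1‖ ^ 2 ∂(kernelIter κ t z))
      = chainVar κ t z + ‖g z - μ1‖ ^ 2 := by
    filter_upwards [ae_mem_of_compl_zero hν] with z hz
    have h := var_decomp (hsupp t z hz) (aestronglyMeasurable_id
      (μ := kernelIter κ t z)) hR μ1
    simpa [chainVar, chainMean, hg] using h
  have hIA : Integrable (chainVar κ t) (κ z₀) := by
    refine integrable_of_boundS hν (chainVar_stronglyMeasurable t).aestronglyMeasurable
      (C := (R + R) ^ 2) fun z hz => ?_
    rw [Real.norm_eq_abs, abs_of_nonneg (chainVar_nonneg t z)]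
    exact chainVar_le_boundS hSmeas hstay hR t z hz
  have hIB : Integrable (fun z => ‖g z - μ1‖ ^ 2) (κ z₀) :=
    integrable_normsq_of_boundS hν hgm hgB μ1
  have hVsplit : chainVar κ (t + 1) z₀
      = ∫ z, chainVar κ t z ∂(κ z₀) + ∫ z, ‖g z - μ1‖ ^ 2 ∂(κ z₀) := by
    rw [hsplit, integral_congr_ae hinner_eq, integral_add hIA hIB]
  have hA : ∫ z, chainVar κ t z ∂(κ z₀) ≤ chainVarSup κ S t :=
    integral_le_of_boundS hν hIA fun z hz => chainVar_le_chainVarSup hSmeas hstay hR t z hz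
  have hdouble : ∫ y, ∫ z, ‖g z - g y‖ ^ 2 ∂(κ z₀) ∂(κ z₀)
      = 2 * ∫ z, ‖g z - μ1‖ ^ 2 ∂(κ z₀) := by
    have h := var_double hν hgm hgB
    rw [← hmean] at h
    exact h
  have hdouble1 : ∫ y, ∫ z, ‖(z : EuclideanSpace ℝ (Fin d)) - y‖ ^ 2 ∂(κ z₀) ∂(κ z₀)
      = 2 * chainVar κ 1 z₀ := by
    have h := var_double hν (aestronglyMeasurable_id (μ := κ z₀))
      (g := fun w : EuclideanSpace ℝ (Fin d) => w) hR
    rw [h]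
    congr 1
    simp only [chainVar, chainMean, hκ1]
  have hFm : StronglyMeasurable (fun y : EuclideanSpace ℝ (Fin d) =>
      ∫ z, ‖g z - g y‖ ^ 2 ∂(κ z₀)) := by
    have hsm : StronglyMeasurable
        (fun p : EuclideanSpace ℝ (Fin d) × EuclideanSpace ℝ (Fin d) => ‖g p.2 - g p.1‖ ^ 2) := by
      have hmg := (chainMean_stronglyMeasurable (κ := κ) t).measurable
      rw [hg]
      exact (((hmg.comp measurable_snd).sub (hmg.comp measurable_fst)).norm.pow_const
        2).stronglyMeasurable
    have h := hsm.integral_kernel_prod_right'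
      (κ := Kernel.const (EuclideanSpace ℝ (Fin d)) (κ z₀))
    simpa [Kernel.const_apply] using h
  have hGm : StronglyMeasurable (fun y : EuclideanSpace ℝ (Fin d) =>
      ∫ z, ‖z - y‖ ^ 2 ∂(κ z₀)) := by
    have hsm : StronglyMeasurable
        (fun p : EuclideanSpace ℝ (Fin d) × EuclideanSpace ℝ (Fin d) => ‖p.2 - p.1‖ ^ 2) :=
      ((measurable_snd.sub measurable_fst).norm.pow_const 2).stronglyMeasurable
    have h := hsm.integral_kernel_prod_right'
      (κ := Kernel.const (EuclideanSpace ℝ (Fin d)) (κ z₀))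
    simpa [Kernel.const_apply] using h
  have hFint : Integrable (fun y => ∫ z, ‖g z - g y‖ ^ 2 ∂(κ z₀)) (κ z₀) := by
    refine integrable_of_boundS hν hFm.aestronglyMeasurable (C := (R + R) ^ 2) fun y hy => ?_
    rw [Real.norm_eq_abs, abs_of_nonneg (integral_nonneg fun z => by positivity)]
    refine integral_le_of_boundS hν (integrable_normsq_of_boundS hν hgm hgB (g y))
      fun z hz => ?_
    have h1 : ‖g z - g y‖ ≤ R + R := (norm_sub_le _ _).trans (add_le_add (hgB z hz) (hgB y hy))
    exact pow_le_pow_left₀ (norm_nonneg _) h1 2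
  have hGint : Integrable (fun y => η ^ (2 * t) * ∫ z, ‖z - y‖ ^ 2 ∂(κ z₀)) (κ z₀) := by
    refine Integrable.const_mul ?_ _
    refine integrable_of_boundS hν hGm.aestronglyMeasurable (C := (R + R) ^ 2) fun y hy => ?_
    rw [Real.norm_eq_abs, abs_of_nonneg (integral_nonneg fun z => by positivity)]
    refine integral_le_of_boundS hν
      (integrable_normsq_of_boundS hν aestronglyMeasurable_id hR y) fun z hz => ?_
    have h1 : ‖z - y‖ ≤ R + R := (norm_sub_le _ _).trans (add_le_add (hR z hz) (hR y hy))
    exact pow_le_pow_left₀ (norm_nonneg _) h1 2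
  have hFG : ∀ᵐ y ∂(κ z₀), (∫ z, ‖g z - g y‖ ^ 2 ∂(κ z₀))
      ≤ η ^ (2 * t) * ∫ z, ‖z - y‖ ^ 2 ∂(κ z₀) := by
    filter_upwards [ae_mem_of_compl_zero hν] with y hy
    have hptw : ∀ᵐ z ∂(κ z₀), ‖g z - g y‖ ^ 2 ≤ η ^ (2 * t) * ‖z - y‖ ^ 2 := by
      filter_upwards [ae_mem_of_compl_zero hν] with z hz
      have h := hcontr z hz y hy t
      calc ‖g z - g y‖ ^ 2 ≤ (η ^ t * ‖z - y‖) ^ 2 := pow_le_pow_left₀ (norm_nonneg _) h 2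
      _ = η ^ (2 * t) * ‖z - y‖ ^ 2 := by rw [mul_pow, ← pow_mul, mul_comm t 2]
    calc (∫ z, ‖g z - g y‖ ^ 2 ∂(κ z₀))
        ≤ ∫ z, η ^ (2 * t) * ‖z - y‖ ^ 2 ∂(κ z₀) :=
          integral_mono_ae (integrable_normsq_of_boundS hν hgm hgB (g y))
            ((integrable_normsq_of_boundS hν aestronglyMeasurable_id hR y).const_mul _) hptw
    _ = η ^ (2 * t) * ∫ z, ‖z - y‖ ^ 2 ∂(κ z₀) := integral_const_mul _ _
  have hTle : 2 * ∫ z, ‖g z - μ1‖ ^ 2 ∂(κ z₀)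
      ≤ η ^ (2 * t) * (2 * chainVar κ 1 z₀) := by
    calc 2 * ∫ z, ‖g z - μ1‖ ^ 2 ∂(κ z₀)
        = ∫ y, ∫ z, ‖g z - g y‖ ^ 2 ∂(κ z₀) ∂(κ z₀) := hdouble.symm
    _ ≤ ∫ y, η ^ (2 * t) * ∫ z, ‖z - y‖ ^ 2 ∂(κ z₀) ∂(κ z₀) :=
          integral_mono_ae hFint hGint hFG
    _ = η ^ (2 * t) * ∫ y, ∫ z, ‖z - y‖ ^ 2 ∂(κ z₀) ∂(κ z₀) := integral_const_mul _ _
    _ = η ^ (2 * t) * (2 * chainVar κ 1 z₀) := by rw [hdouble1]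
  have hvar1 : chainVar κ 1 z₀ ≤ chainVarSup κ S 1 :=
    chainVar_le_chainVarSup hSmeas hstay hR 1 z₀ hz₀
  have hTfin : ∫ z, ‖g z - μ1‖ ^ 2 ∂(κ z₀) ≤ η ^ (2 * t) * chainVarSup κ S 1 := by
    nlinarith [pow_nonneg hη (2 * t)]
  rw [hVsplit]
  exact add_le_add hA hTfin

lemma chainVarSup_succ_le (hSmeas : MeasurableSet S)
    (hstay : ∀ z ∈ S, κ z Sᶜ = 0) {R : ℝ} (hR : ∀ z ∈ S, ‖z‖ ≤ R)
    {η : ℝ} (hη : 0 ≤ η)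
    (hcontr : ∀ z₀ ∈ S, ∀ z₁ ∈ S, ∀ t : ℕ,
      ‖chainMean κ t z₀ - chainMean κ t z₁‖ ≤ η ^ t * ‖z₀ - z₁‖)
    (t : ℕ) :
    chainVarSup κ S (t + 1) ≤ chainVarSup κ S t + η ^ (2 * t) * chainVarSup κ S 1 := by
  rcases S.eq_empty_or_nonempty with hS | hS
  · have hE : IsEmpty (↥S) := by rw [hS]; exact Set.isEmpty_coe_sort.mpr rfl
    have h0 : chainVarSup κ S (t + 1) = 0 := by
      rw [chainVarSup]
      exact Real.iSup_of_isEmpty _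
    rw [h0]
    exact add_nonneg (chainVarSup_nonneg t)
      (mul_nonneg (pow_nonneg hη _) (chainVarSup_nonneg 1))
  · have : Nonempty ↥S := hS.to_subtype
    exact ciSup_le fun z => chainVar_succ_le hSmeas hstay hR hη hcontr t z.2

end Aux

/-- **Variance lemma** (Lemma 2.4). Let `(Z_t)` be a Markov chain with values in
a bounded measurable set `S ⊆ ℝ^d` (i.e. the kernel never leaves `S`), whose
expected positions contract: `‖E_{z₀} Z_t − E_{z̃₀} Z_t‖₂ ≤ η^t ‖z₀ − z̃₀‖₂` for
some `0 < η < 1`. Then `v_t ≤ v₁ · min {t, (1−η²)⁻¹}` for all `t ≥ 1`. -/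
theorem variance_bound_from_contraction {d : ℕ}
    (κ : Kernel (EuclideanSpace ℝ (Fin d)) (EuclideanSpace ℝ (Fin d)))
    [IsMarkovKernel κ]
    (S : Set (EuclideanSpace ℝ (Fin d))) (hSmeas : MeasurableSet S)
    (hSbdd : Bornology.IsBounded S)
    (hstay : ∀ z ∈ S, κ z Sᶜ = 0)
    (η : ℝ) (hη0 : 0 < η) (hη1 : η < 1)
    (hcontr : ∀ z₀ ∈ S, ∀ z₁ ∈ S, ∀ t : ℕ,
      ‖chainMean κ t z₀ - chainMean κ t z₁‖ ≤ η ^ t * ‖z₀ - z₁‖) :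
    ∀ t : ℕ, 1 ≤ t →
      chainVarSup κ S t ≤ chainVarSup κ S 1 * min (t : ℝ) ((1 - η ^ 2)⁻¹) := by
  obtain ⟨r, hr⟩ := hSbdd.subset_closedBall 0
  have hR : ∀ z ∈ S, ‖z‖ ≤ max r 0 := fun z hz => by
    have h := hr hz
    rw [Metric.mem_closedBall, dist_zero_right] at h
    exact h.trans (le_max_left _ _)
  have hη : 0 ≤ η := hη0.le
  have claim : ∀ t : ℕ, chainVarSup κ S (t + 1)
      ≤ chainVarSup κ S 1 * ∑ s ∈ Finset.range (t + 1), (η ^ 2) ^ s := by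
    intro t
    induction t with
    | zero => simp
    | succ t ih =>
        have hstep := chainVarSup_succ_le hSmeas hstay hR hη hcontr (t + 1)
        have hpow : η ^ (2 * (t + 1)) = (η ^ 2) ^ (t + 1) := by rw [← pow_mul]
        calc chainVarSup κ S (t + 1 + 1)
            ≤ chainVarSup κ S (t + 1) + η ^ (2 * (t + 1)) * chainVarSup κ S 1 := hstep
        _ ≤ chainVarSup κ S 1 * ∑ s ∈ Finset.range (t + 1), (η ^ 2) ^ s
              + η ^ (2 * (t + 1)) * chainVarSup κ S 1 := by linarith
        _ = chainVarSup κ S 1 * ∑ s ∈ Finset.range (t + 1 + 1), (η ^ 2) ^ s := by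
              rw [hpow, Finset.sum_range_succ _ (t + 1)]
              ring
  have hηsq : η ^ 2 < 1 := by nlinarith
  have hsum : ∀ n : ℕ, ∑ s ∈ Finset.range n, (η ^ 2) ^ s ≤ min (n : ℝ) ((1 - η ^ 2)⁻¹) := by
    intro n
    refine le_min ?_ ?_
    · calc ∑ s ∈ Finset.range n, (η ^ 2) ^ s ≤ (Finset.range n).card • (1 : ℝ) :=
            Finset.sum_le_card_nsmul _ _ _ fun s _ => pow_le_one₀ (by positivity) hηsq.le
      _ = n := by simp
    · have h0 : (0 : ℝ) < 1 - η ^ 2 := by linarith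
      rw [geom_sum_eq (ne_of_lt hηsq) n,
        show ((η ^ 2) ^ n - 1) / (η ^ 2 - 1) = (1 - (η ^ 2) ^ n) / (1 - η ^ 2) by
          rw [← neg_div_neg_eq]; ring_nf,
        div_le_iff₀ h0]
      have hinv : (1 - η ^ 2)⁻¹ * (1 - η ^ 2) = 1 := inv_mul_cancel₀ h0.ne'
      nlinarith [pow_nonneg (by positivity : (0:ℝ) ≤ η ^ 2) n]
  intro t ht
  obtain ⟨s, rfl⟩ : ∃ s, t = s + 1 := ⟨t - 1, (Nat.succ_pred_eq_of_pos ht).symm⟩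
  have hv1 : 0 ≤ chainVarSup κ S 1 := chainVarSup_nonneg (κ := κ) (S := S) 1
  calc chainVarSup κ S (s + 1)
      ≤ chainVarSup κ S 1 * ∑ i ∈ Finset.range (s + 1), (η ^ 2) ^ i := claim s
  _ ≤ chainVarSup κ S 1 * min ((s + 1 : ℕ) : ℝ) ((1 - η ^ 2)⁻¹) :=
      mul_le_mul_of_nonneg_left (hsum (s + 1)) hv1
end
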